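/- arXiv:0707.1365 — 6 statements merged into one kernel-verified Lean document; each statement's English description precedes it below -/
import Mathlib

section
/- Let J be a strongly stable Artinian monomial ideal in R = k[x_1,…,x_n], with f_1,…,f_n and J_1,…,J_{n−1} defined as in the context. Then the minimal system of monomial generators of J is exactly {x_1^{f_1}} ∪ {x_1^{α_1}⋯x_{i−1}^{α_{i−1}}·x_i^{f_i(α_1,…,α_{i−1})} : 2 ≤ i ≤ n and (α_1,…,α_{i−1}) ∈ J_{i−1}}. -/
/-
Combinatorial framework: a monomial ideal in `k[x_1,…,x_n]` is encoded by its set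
of monomials, viewed as exponent vectors in `Fin n → ℕ` (with `x_1,…,x_n`
corresponding to indices `0,…,n-1`).
-/

/-- A monomial ideal: a set of exponent vectors closed under multiplication by
arbitrary monomials. -/
def IsMonomialIdeal {n : ℕ} (S : Set (Fin n → ℕ)) : Prop :=
  ∀ m ∈ S, ∀ m' : Fin n → ℕ, m + m' ∈ S

/-- `R/J` is a finite-dimensional `k`-vector space iff the set of standard
monomials (the complement of the monomial set of `J`) is finite. -/
def IsArtinianMonomialSet {n : ℕ} (S : Set (Fin n → ℕ)) : Prop :=
  Sᶜ.Finite

/-- Strong stability: if `m ∈ J`, `x_j ∣ m` and `i < j`, then `x_i · m / x_j ∈ J`. -/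
def IsStronglyStable {n : ℕ} (S : Set (Fin n → ℕ)) : Prop :=
  ∀ m ∈ S, ∀ i j : Fin n, i < j → 0 < m j →
    (fun l => if l = i then m i + 1 else if l = j then m j - 1 else m l) ∈ S

/-- `x^a < x^b` in the reverse lexicographic order with `x_1 > ⋯ > x_n`
(used to compare monomials of the same degree): at the last index where the
exponents differ, `a` has the larger exponent. -/
def RevLexLT {n : ℕ} (a b : Fin n → ℕ) : Prop :=
  ∃ j : Fin n, b j < a j ∧ ∀ l : Fin n, j < l → a l = b l

/-- Total degree of a monomial. -/
def mdeg {n : ℕ} (m : Fin n → ℕ) : ℕ := ∑ l, m l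

/-- `m` is a minimal (monomial) generator of the monomial ideal `S`. -/
def IsMinGen {n : ℕ} (S : Set (Fin n → ℕ)) (m : Fin n → ℕ) : Prop :=
  m ∈ S ∧ ∀ m' ∈ S, (∀ l, m' l ≤ m l) → m' = m

/-- Almost reverse lexicographic: `S` contains every monomial that is greater in
reverse lexicographic order than some minimal generator of `S` of the same degree. -/
def AlmostRevLex {n : ℕ} (S : Set (Fin n → ℕ)) : Prop :=
  ∀ M N : Fin n → ℕ, IsMinGen S N → mdeg M = mdeg N → RevLexLT N M → M ∈ S

/-- The exponent vector of `x_1^{α 0} ⋯ x_i^{α (i-1)} · x_{i+1}^t`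
(0-based: positions `0,…,i-1` carry `α`, position `i` carries `t`). -/
def monVec (n i : ℕ) (α : ℕ → ℕ) (t : ℕ) : Fin n → ℕ :=
  fun l => if (l : ℕ) < i then α l else if (l : ℕ) = i then t else 0

/-- `fF S i α = min {t : x_1^{α 0}⋯x_i^{α (i-1)} · x_{i+1}^t ∈ S}`; this is the
paper's `f_{i+1}(α_1,…,α_i)` (0-based `i`, so `fF S 0 _` is the paper's `f_1`). -/
noncomputable def fF {n : ℕ} (S : Set (Fin n → ℕ)) (i : ℕ) (α : ℕ → ℕ) : ℕ :=
  sInf {t | monVec n i α t ∈ S}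

/-- The paper's set `J_i`: tuples `(α_1,…,α_i)` (recorded in positions
`0,…,i-1` and padded by zeros) with `α_1 < f_1` and
`α_j < f_j(α_1,…,α_{j-1})` for `2 ≤ j ≤ i`. -/
def JSet {n : ℕ} (S : Set (Fin n → ℕ)) (i : ℕ) : Set (ℕ → ℕ) :=
  {α | (∀ l, i ≤ l → α l = 0) ∧ ∀ j, j < i → α j < fF S j α}

/-- `|α| = α_1 + ⋯ + α_i`. -/
def asum (i : ℕ) (α : ℕ → ℕ) : ℕ := ∑ j ∈ Finset.range i, α j

/-- The tuple `(0,…,0,s)` of length `i`. -/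
def lastVec (i s : ℕ) : ℕ → ℕ := fun l => if l = i - 1 then s else 0

/-- Reverse lexicographic comparison of `i`-tuples: `x^a < x^b`. -/
def RevLexLT' (a b : ℕ → ℕ) : Prop :=
  ∃ j : ℕ, b j < a j ∧ ∀ l, j < l → a l = b l

section AuxMinGen

variable {n : ℕ} {S : Set (Fin n → ℕ)}

lemma monVec_lt {i : ℕ} {α : ℕ → ℕ} {t : ℕ} {l : Fin n} (h : (l : ℕ) < i) :
    monVec n i α t l = α l := by
  unfold monVec; rw [if_pos h]

lemma monVec_eq' {i : ℕ} {α : ℕ → ℕ} {t : ℕ} {l : Fin n} (h : (l : ℕ) = i) :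
    monVec n i α t l = t := by
  unfold monVec; rw [if_neg (by omega), if_pos h]

lemma monVec_gt {i : ℕ} {α : ℕ → ℕ} {t : ℕ} {l : Fin n} (h : i < (l : ℕ)) :
    monVec n i α t l = 0 := by
  unfold monVec; rw [if_neg (by omega), if_neg (by omega)]

lemma upward (hIdeal : IsMonomialIdeal S) {a b : Fin n → ℕ}
    (ha : a ∈ S) (hab : ∀ l, a l ≤ b l) : b ∈ S := by
  have h := hIdeal a ha (fun l => b l - a l)
  have e : (a + fun l => b l - a l) = b := by
    funext l
    simp only [Pi.add_apply]
    have := hab l; omega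
  rwa [e] at h

lemma fF_nonempty (hArt : IsArtinianMonomialSet S) {i : ℕ} (hi : i < n) (α : ℕ → ℕ) :
    {t | monVec n i α t ∈ S}.Nonempty := by
  by_contra h
  rw [Set.not_nonempty_iff_eq_empty] at h
  have hmem : ∀ t : ℕ, monVec n i α t ∈ Sᶜ := by
    intro t hc
    have ht : t ∈ {t | monVec n i α t ∈ S} := hc
    simp [h] at ht
  have hinj : Function.Injective (fun t => monVec n i α t) := by
    intro a b hab
    have h2 := congrFun hab ⟨i, hi⟩
    simp only at h2
    rwa [monVec_eq' (l := (⟨i, hi⟩ : Fin n)) rfl, monVec_eq' (l := (⟨i, hi⟩ : Fin n)) rfl] at h2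
  exact (Set.infinite_of_injective_forall_mem hinj hmem) hArt

lemma fF_mem (hArt : IsArtinianMonomialSet S) {i : ℕ} (hi : i < n) (α : ℕ → ℕ) :
    monVec n i α (fF S i α) ∈ S :=
  Nat.sInf_mem (fF_nonempty hArt hi α)

lemma fF_le {i : ℕ} {α : ℕ → ℕ} {t : ℕ} (h : monVec n i α t ∈ S) :
    fF S i α ≤ t := Nat.sInf_le h

/-- Key minimality lemma: `monVec n i α (fF S i α)` is a minimal element of `S`. -/
lemma key_min (hIdeal : IsMonomialIdeal S) (hSS : IsStronglyStable S)
    {i : ℕ} (hi : i < n) (α : ℕ → ℕ)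
    (hpos : i = 0 ∨ 0 < fF S i α) (hmem : monVec n i α (fF S i α) ∈ S) :
    ∀ w ∈ S, (∀ l, w l ≤ monVec n i α (fF S i α) l) → w = monVec n i α (fF S i α) := by
  set F := fF S i α with hF
  set m := monVec n i α F with hm
  suffices H : ∀ N (w : Fin n → ℕ), w ∈ S → (∀ l, w l ≤ m l) →
      (∑ l, l.val * w l) = N → w = m by
    intro w hw hle; exact H _ w hw hle rfl
  intro N
  induction N using Nat.strong_induction_on with
  | _ N ih =>
    intro w hw hle hμ
    by_contra hne
    have hex : ∃ j : Fin n, w j < m j := by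
      by_contra hc
      push_neg at hc
      exact hne (funext fun l => le_antisymm (hle l) (hc l))
    set T : Finset (Fin n) := Finset.univ.filter (fun j => w j < m j) with hT
    have hTne : T.Nonempty := ⟨hex.choose, by simp [hT, hex.choose_spec]⟩
    set j := T.max' hTne with hjdef
    have hj : w j < m j := by
      have := T.max'_mem hTne
      simpa [hT] using this
    have hmax : ∀ l : Fin n, j < l → w l = m l := by
      intro l hl
      refine le_antisymm (hle l) ?_
      by_contra hc
      push_neg at hc
      have hlT : l ∈ T := by simp [hT]; omega
      exact absurd (T.le_max' l hlT) (not_le.mpr hl)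
    have hji : (j : ℕ) ≤ i := by
      by_contra hc
      push_neg at hc
      have h0 : m j = 0 := monVec_gt hc
      omega
    rcases Nat.lt_or_ge (j : ℕ) i with hlt | hge
    · -- Borel move from position `i` down to `j`
      have hipos : 0 < F := by
        rcases hpos with h | h
        · omega
        · exact h
      set p : Fin n := ⟨i, hi⟩ with hp
      have hjp : j < p := by
        rw [Fin.lt_def]; exact hlt
      have hmp : m p = F := monVec_eq' (l := p) rfl
      have hwp : w p = F := by
        have := hmax p hjp; omega
      have hw' := hSS w hw j p hjp (by omega)
      set w' : Fin n → ℕ :=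
        (fun l => if l = j then w j + 1 else if l = p then w p - 1 else w l) with hw'def
      have hjp' : j ≠ p := Fin.ne_of_lt hjp
      have hw'j : w' j = w j + 1 := by simp [hw'def]
      have hw'p : w' p = w p - 1 := by simp [hw'def, Ne.symm hjp']
      have hw'other : ∀ l : Fin n, l ≠ j → l ≠ p → w' l = w l := by
        intro l h1 h2; simp [hw'def, h1, h2]
      have hle' : ∀ l, w' l ≤ m l := by
        intro l
        by_cases h1 : l = j
        · subst h1; rw [hw'j]; omega
        · by_cases h2 : l = p
          · subst h2; rw [hw'p]; have := hle p; omega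
          · rw [hw'other l h1 h2]; exact hle l
      -- compute the weighted sums
      have hjmem : j ∈ Finset.univ.erase p := Finset.mem_erase.mpr ⟨hjp', Finset.mem_univ j⟩
      have key1 : ∀ v : Fin n → ℕ, (∑ l ∈ (Finset.univ.erase p).erase j, l.val * v l)
          + j.val * v j + p.val * v p = ∑ l, l.val * v l := by
        intro v
        rw [Finset.sum_erase_add _ _ hjmem, Finset.sum_erase_add _ _ (Finset.mem_univ p)]
      have hinner : (∑ l ∈ (Finset.univ.erase p).erase j, l.val * w' l)
          = ∑ l ∈ (Finset.univ.erase p).erase j, l.val * w l := by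
        refine Finset.sum_congr rfl (fun l hl => ?_)
        rw [Finset.mem_erase, Finset.mem_erase] at hl
        rw [hw'other l hl.1 hl.2.1]
      have hμ' : (∑ l, l.val * w' l) + (p : ℕ) = N + (j : ℕ) := by
        rw [← key1 w', hinner, hw'j, hw'p]
        rw [← hμ, ← key1 w]
        have e1 : (j : ℕ) * (w j + 1) = (j : ℕ) * w j + (j : ℕ) := by ring
        have e2 : (p : ℕ) * (w p - 1) + (p : ℕ) = (p : ℕ) * w p := by
          obtain ⟨c, hc⟩ := Nat.exists_eq_add_of_le (show 1 ≤ w p by omega)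
          rw [hc]
          have : 1 + c - 1 = c := by omega
          rw [this]; ring
        linarith [e1, e2]
      have hμlt : (∑ l, l.val * w' l) < N := by
        have : (j : ℕ) < (p : ℕ) := hlt
        omega
      have heq := ih _ hμlt w' hw' hle' rfl
      have := congrFun heq p
      rw [hw'p] at this
      omega
    · -- j sits at position i: contradict minimality of `fF`
      have hji' : (j : ℕ) = i := le_antisymm hji hge
      have hmj : m j = F := monVec_eq' hji'
      have hup : ∀ l, w l ≤ monVec n i α (w j) l := by
        intro l
        rcases lt_trichotomy ((l : ℕ)) i with h | h | h
        · rw [monVec_lt h]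
          have h2 := hle l
          rw [hm, monVec_lt h] at h2
          exact h2
        · have hlj : l = j := Fin.ext (by omega)
          rw [monVec_eq' h, hlj]
        · rw [monVec_gt h]
          have h2 := hle l
          rw [hm, monVec_gt h] at h2
          exact h2
      have hS' : monVec n i α (w j) ∈ S := upward hIdeal hw hup
      have : F ≤ w j := fF_le hS'
      omega

end AuxMinGen

/-- Proposition on minimal generators.  Let `J` be a strongly
stable Artinian monomial ideal in `k[x_1,…,x_n]`.  Then the minimal system of
monomial generators of `J` is exactly
`{x_1^{f_1}} ∪ {x_1^{α_1}⋯x_{i-1}^{α_{i-1}} x_i^{f_i(α)} : 2 ≤ i ≤ n, α ∈ J_{i-1}}`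
(here, in 0-based indexing, `i - 1` in the paper corresponds to `i` below). -/
theorem minimal_generators_of_strongly_stable
    {n : ℕ} (hn : 0 < n) (S : Set (Fin n → ℕ))
    (hIdeal : IsMonomialIdeal S) (hArt : IsArtinianMonomialSet S)
    (hSS : IsStronglyStable S) (m : Fin n → ℕ) :
    IsMinGen S m ↔
      m = monVec n 0 0 (fF S 0 0) ∨
      ∃ i, 1 ≤ i ∧ i ≤ n - 1 ∧ ∃ α ∈ JSet S i, m = monVec n i α (fF S i α) := by
  constructor
  · rintro ⟨hmS, hmin⟩
    by_cases h0 : ∀ l, m l = 0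
    · left
      have hz : monVec n 0 0 0 = m := by
        funext l
        simp [monVec, h0 l]
      have hf0 : fF S 0 0 = 0 :=
        Nat.le_zero.mp (fF_le (by rw [hz]; exact hmS))
      rw [hf0]
      exact hz.symm
    · push_neg at h0
      obtain ⟨l0, hl0⟩ := h0
      set T : Finset (Fin n) := Finset.univ.filter (fun l => 0 < m l) with hT
      have hTne : T.Nonempty := ⟨l0, by simp [hT]; omega⟩
      set j := T.max' hTne with hjdef
      have hjpos : 0 < m j := by simpa [hT] using T.max'_mem hTne
      have hmax : ∀ l : Fin n, (j : ℕ) < (l : ℕ) → m l = 0 := by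
        intro l hl
        by_contra hc
        have hlT : l ∈ T := by simp [hT]; omega
        have := T.le_max' l hlT
        rw [Fin.le_def] at this
        omega
      set i := (j : ℕ) with hidef
      have hin : i < n := j.isLt
      set α : ℕ → ℕ := fun l => if h : l < i then m ⟨l, h.trans hin⟩ else 0 with hα
      have hαlt : ∀ l : Fin n, (l : ℕ) < i → α (l : ℕ) = m l := by
        intro l hl
        rw [hα]
        simp only
        rw [dif_pos hl]
      have hmeq : m = monVec n i α (m j) := by
        funext l
        rcases lt_trichotomy ((l : ℕ)) i with h | h | h
        · rw [monVec_lt h, hαlt l h]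
        · rw [monVec_eq' h]
          have : l = j := Fin.ext (by omega)
          rw [this]
        · rw [monVec_gt h, hmax l h]
      have hfle : fF S i α ≤ m j := fF_le (by rw [← hmeq]; exact hmS)
      have hfeq : m j = fF S i α := by
        refine le_antisymm ?_ hfle
        by_contra hc
        push_neg at hc
        have hmemF : monVec n i α (fF S i α) ∈ S := fF_mem hArt hin α
        have hleF : ∀ l, monVec n i α (fF S i α) l ≤ m l := by
          intro l
          rcases lt_trichotomy ((l : ℕ)) i with h | h | h
          · rw [monVec_lt h, hαlt l h]
          · rw [monVec_eq' h]
            have hlj : l = j := Fin.ext (by omega)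
            rw [hlj]
            omega
          · rw [monVec_gt h]
            exact Nat.zero_le _
        have heq := hmin _ hmemF hleF
        have h2 := congrFun heq j
        rw [monVec_eq' (show ((j : ℕ) : ℕ) = i from rfl)] at h2
        omega
      have hJ : ∀ k, k < i → α k < fF S k α := by
        intro k hk
        by_contra hc
        push_neg at hc
        have hkn : k < n := hk.trans hin
        have hmemk : monVec n k α (fF S k α) ∈ S := fF_mem hArt hkn α
        have hmemk' : monVec n k α (α k) ∈ S := by
          refine upward hIdeal hmemk ?_
          intro l
          rcases lt_trichotomy ((l : ℕ)) k with h | h | h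
          · rw [monVec_lt h, monVec_lt h]
          · rw [monVec_eq' h, monVec_eq' h]
            exact hc
          · rw [monVec_gt h]
            exact Nat.zero_le _
        have hlek : ∀ l, monVec n k α (α k) l ≤ m l := by
          intro l
          rcases lt_trichotomy ((l : ℕ)) k with h | h | h
          · rw [monVec_lt h, hαlt l (h.trans hk)]
          · rw [monVec_eq' h, ← h, hαlt l (by omega)]
          · rw [monVec_gt h]
            exact Nat.zero_le _
        have heq := hmin _ hmemk' hlek
        have h2 := congrFun heq j
        rw [monVec_gt (show k < ((j : ℕ) : ℕ) from hk)] at h2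
        omega
      by_cases hi0 : i = 0
      · left
        have hmv : ∀ t, monVec n 0 α t = monVec n 0 (0 : ℕ → ℕ) t := by
          intro t
          funext l
          unfold monVec
          simp [Nat.not_lt_zero]
        have hfF : fF S 0 α = fF S 0 (0 : ℕ → ℕ) := by
          unfold fF
          have hsets : {t | monVec n 0 α t ∈ S} = {t | monVec n 0 (0 : ℕ → ℕ) t ∈ S} := by
            ext t
            simp only [Set.mem_setOf_eq, hmv t]
          rw [hsets]
        rw [hmeq, hfeq, hi0, hfF]
        exact hmv _
      · right
        refine ⟨i, by omega, by omega, α, ⟨?_, hJ⟩, ?_⟩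
        · intro l hl
          rw [hα]
          simp only
          rw [dif_neg (by omega)]
        · rw [hmeq, hfeq]
  · rintro (h | ⟨i, hi1, hi2, α, hα, heq⟩)
    · have hmem := fF_mem hArt hn (0 : ℕ → ℕ)
      subst h
      exact ⟨hmem, key_min hIdeal hSS hn (0 : ℕ → ℕ) (Or.inl rfl) hmem⟩
    · have hin : i < n := by omega
      have hmem := fF_mem hArt hin α
      have hpos : 0 < fF S i α := by
        by_contra hc
        push_neg at hc
        have hF0 : fF S i α = 0 := by omega
        have h0mem : monVec n i α 0 ∈ S := by rw [← hF0]; exact hmem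
        have hidentity : monVec n i α 0 = monVec n (i - 1) α (α (i - 1)) := by
          funext l
          rcases lt_trichotomy ((l : ℕ)) (i - 1) with h | h | h
          · rw [monVec_lt h, monVec_lt (show (l : ℕ) < i by omega)]
          · rw [monVec_eq' h, monVec_lt (show (l : ℕ) < i by omega), h]
          · rw [monVec_gt h]
            by_cases h2 : (l : ℕ) = i
            · rw [monVec_eq' h2]
            · rw [monVec_gt (by omega)]
        rw [hidentity] at h0mem
        have hle := fF_le h0mem
        have := hα.2 (i - 1) (by omega)
        omega
      subst heq
      exact ⟨hmem, key_min hIdeal hSS hin α (Or.inr hpos) hmem⟩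
end

section
/- Let J be a strongly stable Artinian monomial ideal in R = k[x_1,…,x_n] and 1 ≤ i ≤ n−1. If (0,…,0,a) and (0,…,0,b) are elements of J_i with a ≤ b, then a + f_{i+1}(0,…,0,a) ≥ b + f_{i+1}(0,…,0,b). -/

lemma fF_set_nonempty {n : ℕ} (S : Set (Fin n → ℕ)) (hArt : IsArtinianMonomialSet S)
    (i : ℕ) (hi : i < n) (α : ℕ → ℕ) : {t | monVec n i α t ∈ S}.Nonempty := by
  by_contra h
  rw [Set.not_nonempty_iff_eq_empty] at h
  have hinj : Function.Injective (fun t => monVec n i α t) := by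
    intro s t hst
    have := congrFun hst ⟨i, hi⟩
    simpa [monVec] using this
  have hmem : ∀ t : ℕ, monVec n i α t ∈ Sᶜ := by
    intro t
    intro hc
    have : t ∈ {t | monVec n i α t ∈ S} := hc
    simp [h] at this
  have : (Sᶜ).Infinite := Set.infinite_of_injective_forall_mem hinj hmem
  exact this hArt

lemma fF_step {n : ℕ} (S : Set (Fin n → ℕ))
    (hArt : IsArtinianMonomialSet S) (hSS : IsStronglyStable S)
    (i : ℕ) (hi1 : 1 ≤ i) (hin : i < n)
    (c : ℕ) (hc : monVec n i (lastVec i c) 0 ∉ S) :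
    (c + 1) + fF S i (lastVec i (c + 1)) ≤ c + fF S i (lastVec i c) := by
  set f := fF S i (lastVec i c) with hf
  have hne := fF_set_nonempty S hArt i hin (lastVec i c)
  have hfmem : monVec n i (lastVec i c) f ∈ S := Nat.sInf_mem hne
  have hfpos : 0 < f := by
    rcases Nat.eq_zero_or_pos f with h0 | h
    · exact absurd (h0 ▸ hfmem) hc
    · exact h
  have him1 : i - 1 < n := by omega
  have hlt : (⟨i - 1, him1⟩ : Fin n) < ⟨i, hin⟩ := by
    simp [Fin.lt_def]; omega
  have hmj : 0 < monVec n i (lastVec i c) f ⟨i, hin⟩ := by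
    simpa [monVec] using hfpos
  have hmem := hSS _ hfmem ⟨i - 1, him1⟩ ⟨i, hin⟩ hlt hmj
  have heq : (fun l => if l = (⟨i - 1, him1⟩ : Fin n) then
        monVec n i (lastVec i c) f ⟨i - 1, him1⟩ + 1
      else if l = ⟨i, hin⟩ then monVec n i (lastVec i c) f ⟨i, hin⟩ - 1
      else monVec n i (lastVec i c) f l)
      = monVec n i (lastVec i (c + 1)) (f - 1) := by
    funext l
    rcases l with ⟨v, hv⟩
    simp only [monVec, lastVec, Fin.mk.injEq]
    rcases Nat.lt_trichotomy v (i - 1) with h | h | h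
    · have h1 : v ≠ i - 1 := by omega
      have h2 : v ≠ i := by omega
      simp [h1, h2, show v < i from by omega, show v ≠ i - 1 from h1]
    · subst h
      simp [show i - 1 < i from by omega]
    · have h1 : v ≠ i - 1 := by omega
      rcases eq_or_ne v i with h2 | h2
      · simp [h1, h2, show ¬ v < i from by omega, show i ≠ i - 1 from by omega]
      · simp [h1, h2, show ¬ v < i from by omega]
  rw [heq] at hmem
  have hle : fF S i (lastVec i (c + 1)) ≤ f - 1 := Nat.sInf_le hmem
  omega

lemma pow_not_mem {n : ℕ} (S : Set (Fin n → ℕ)) (hIdeal : IsMonomialIdeal S)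
    (i : ℕ) (hi1 : 1 ≤ i) (hin : i < n)
    (b : ℕ) (hb : lastVec i b ∈ JSet S i)
    (c : ℕ) (hcb : c ≤ b) : monVec n i (lastVec i c) 0 ∉ S := by
  intro hcS
  have hb2 := hb.2 (i - 1) (by omega)
  have hbv : lastVec i b (i - 1) = b := by simp [lastVec]
  rw [hbv] at hb2
  have hnot : monVec n (i - 1) (lastVec i b) b ∉ S :=
    Nat.notMem_of_lt_sInf hb2
  apply hnot
  have := hIdeal _ hcS (fun l : Fin n => if (l : ℕ) = i - 1 then b - c else 0)
  have heq : monVec n i (lastVec i c) 0 + (fun l : Fin n => if (l : ℕ) = i - 1 then b - c else 0)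
      = monVec n (i - 1) (lastVec i b) b := by
    funext l
    rcases l with ⟨v, hv⟩
    simp only [monVec, lastVec, Pi.add_apply]
    rcases Nat.lt_trichotomy v (i - 1) with h | h | h
    · simp [show v < i from by omega, show v ≠ i - 1 from by omega, h]
    · subst h
      simp [show i - 1 < i from by omega, show ¬ (i-1 < i - 1) from by omega]
      omega
    · rcases eq_or_ne v i with h2 | h2
      · simp [show ¬ v < i from by omega, show v ≠ i - 1 from by omega,
          show ¬ v < i - 1 from by omega, h2, show i ≠ i - 1 from by omega]
      · simp [show ¬ v < i from by omega, show v ≠ i - 1 from by omega,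
          show ¬ v < i - 1 from by omega, h2]
  rwa [heq] at this

/-- Lemma, part (3).  Let `J` be a strongly stable Artinian
monomial ideal in `k[x_1,…,x_n]` and `1 ≤ i ≤ n-1`.  If `(0,…,0,a)` and
`(0,…,0,b)` are elements of `J_i` with `a ≤ b`, then
`a + f_{i+1}(0,…,0,a) ≥ b + f_{i+1}(0,…,0,b)`. -/
theorem fF_lastVec_sum_antitone
    {n : ℕ} (S : Set (Fin n → ℕ))
    (hIdeal : IsMonomialIdeal S) (hArt : IsArtinianMonomialSet S)
    (hSS : IsStronglyStable S)
    (i : ℕ) (hi1 : 1 ≤ i) (hin : i ≤ n - 1)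
    (a b : ℕ) (ha : lastVec i a ∈ JSet S i) (hb : lastVec i b ∈ JSet S i)
    (hab : a ≤ b) :
    b + fF S i (lastVec i b) ≤ a + fF S i (lastVec i a) := by
  have hin' : i < n := by omega
  have key : ∀ c, a ≤ c → c ≤ b → c + fF S i (lastVec i c) ≤ a + fF S i (lastVec i a) := by
    intro c hac
    induction c, hac using Nat.le_induction with
    | base => intro _; exact le_rfl
    | succ c hac ih =>
      intro hcb
      have h1 := fF_step S hArt hSS i hi1 hin' c
        (pow_not_mem S hIdeal i hi1 hin' b hb c (by omega))
      exact h1.trans (ih (by omega))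
  exact key b hab le_rfl
end

section
/- Let J be a strongly stable Artinian monomial ideal in R = k[x_1,…,x_n]. Then J is almost reverse lexicographic if and only if for every 1 ≤ i ≤ n−1 the following two conditions hold: (1) f_{i+1}(0,…,0,|α|+1) + 1 ≤ f_{i+1}(α) for every α = (α_1,…,α_i) ∈ J_i; and (2) f_{i+1}(β) ≤ f_{i+1}(α) for all α, β ∈ J_i with |α| = |β| and α < β in the reverse lexicographic order. -/
namespace ARLAux

variable {n : ℕ} {S : Set (Fin n → ℕ)}

lemma mem_of_le (hIdeal : IsMonomialIdeal S) {a b : Fin n → ℕ}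
    (ha : a ∈ S) (hab : ∀ l, a l ≤ b l) : b ∈ S := by
  have h : b = a + fun l => b l - a l := by
    funext l; have := hab l; simp only [Pi.add_apply]; omega
  rw [h]; exact hIdeal a ha _

lemma monVec_at_lt {i : ℕ} (α : ℕ → ℕ) (t : ℕ) (l : Fin n) (h : (l : ℕ) < i) :
    monVec n i α t l = α l := by
  simp only [monVec]; rw [if_pos h]

lemma monVec_at_gt {i : ℕ} (α : ℕ → ℕ) (t : ℕ) (l : Fin n) (h : i < (l : ℕ)) :
    monVec n i α t l = 0 := by
  simp only [monVec]; rw [if_neg (by omega), if_neg (by omega)]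

lemma monVec_at_lt' {i q : ℕ} (hq : q < n) (α : ℕ → ℕ) (t : ℕ) (h : q < i) :
    monVec n i α t ⟨q, hq⟩ = α q := by
  show (if q < i then α q else if q = i then t else 0) = α q
  rw [if_pos h]

lemma monVec_at_eq' {i : ℕ} (hi : i < n) (α : ℕ → ℕ) (t : ℕ) :
    monVec n i α t ⟨i, hi⟩ = t := by
  show (if i < i then α i else if i = i then t else 0) = t
  simp

lemma fF_nonempty (hArt : IsArtinianMonomialSet S) {i : ℕ} (hi : i < n) (α : ℕ → ℕ) :
    {t | monVec n i α t ∈ S}.Nonempty := by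
  by_contra h
  rw [Set.not_nonempty_iff_eq_empty] at h
  have hinj : Function.Injective (fun t => monVec n i α t) := by
    intro a b hab
    have h2 : monVec n i α a ⟨i, hi⟩ = monVec n i α b ⟨i, hi⟩ := congrFun hab ⟨i, hi⟩
    rwa [monVec_at_eq' hi, monVec_at_eq' hi] at h2
  have hmem : ∀ t : ℕ, monVec n i α t ∈ Sᶜ := by
    intro t hc
    have ht : t ∈ {t | monVec n i α t ∈ S} := hc
    rw [h] at ht
    exact ht
  exact (Set.infinite_of_injective_forall_mem hinj hmem) hArt

lemma fF_mem (hArt : IsArtinianMonomialSet S) {i : ℕ} (hi : i < n) (α : ℕ → ℕ) :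
    monVec n i α (fF S i α) ∈ S :=
  Nat.sInf_mem (fF_nonempty hArt hi α)

lemma mem_iff_fF_le (hIdeal : IsMonomialIdeal S) (hArt : IsArtinianMonomialSet S)
    {i : ℕ} (hi : i < n) (α : ℕ → ℕ) (t : ℕ) :
    monVec n i α t ∈ S ↔ fF S i α ≤ t := by
  constructor
  · exact fun h => Nat.sInf_le h
  · intro h
    apply mem_of_le hIdeal (fF_mem hArt hi α)
    intro l
    simp only [monVec]
    split_ifs <;> omega

lemma monVec_congr {i : ℕ} {α α' : ℕ → ℕ} (h : ∀ l < i, α l = α' l) (t : ℕ) :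
    monVec n i α t = monVec n i α' t := by
  funext l
  simp only [monVec]
  split_ifs with h1
  · exact h _ h1
  · rfl
  · rfl

lemma fF_congr {i : ℕ} {α α' : ℕ → ℕ} (h : ∀ l < i, α l = α' l) :
    fF S i α = fF S i α' := by
  have hset : {t | monVec n i α t ∈ S} = {t | monVec n i α' t ∈ S} := by
    ext t; simp only [Set.mem_setOf_eq]; rw [monVec_congr (n := n) h]
  unfold fF; rw [hset]

lemma asum_succ (α : ℕ → ℕ) (j : ℕ) : asum (j + 1) α = asum j α + α j := by
  unfold asum; exact Finset.sum_range_succ α j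

lemma asum_lastVec {i : ℕ} (h1 : 1 ≤ i) (s : ℕ) : asum i (lastVec i s) = s := by
  unfold asum lastVec
  rw [Finset.sum_ite_eq' (Finset.range i) (i - 1) (fun _ => s)]
  rw [if_pos (Finset.mem_range.mpr (by omega))]

lemma mdeg_monVec {i : ℕ} (hi : i < n) (α : ℕ → ℕ) (t : ℕ) :
    mdeg (monVec n i α t) = asum i α + t := by
  unfold mdeg monVec asum
  rw [Fin.sum_univ_eq_sum_range (fun l => if l < i then α l else if l = i then t else 0) n]
  have hsub : Finset.range (i + 1) ⊆ Finset.range n := by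
    intro x hx; simp only [Finset.mem_range] at *; omega
  rw [← Finset.sum_subset hsub (by
    intro x hx hx2
    simp only [Finset.mem_range] at hx hx2
    split_ifs <;> omega)]
  rw [Finset.sum_range_succ]
  congr 1
  · apply Finset.sum_congr rfl
    intro x hx
    rw [if_pos (Finset.mem_range.mp hx)]
  · rw [if_neg (by omega), if_pos rfl]

lemma fF_step (hIdeal : IsMonomialIdeal S) (hArt : IsArtinianMonomialSet S)
    (hSS : IsStronglyStable S) {i l : ℕ} (hi : i < n) (hl : l < i) (α : ℕ → ℕ) :
    fF S i (fun x => if x = l then α l + 1 else α x) ≤ fF S i α - 1 := by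
  set α' : ℕ → ℕ := fun x => if x = l then α l + 1 else α x with hα'def
  have hln : l < n := lt_trans hl hi
  rcases Nat.eq_zero_or_pos (fF S i α) with h0 | hpos
  · have h1 : monVec n i α 0 ∈ S := by
      rw [mem_iff_fF_le hIdeal hArt hi]; omega
    have h2 : monVec n i α' 0 ∈ S := by
      apply mem_of_le hIdeal h1
      intro x
      rcases Nat.lt_trichotomy (x : ℕ) i with hc | hc | hc
      · rw [monVec_at_lt α 0 x hc, monVec_at_lt α' 0 x hc]
        simp only [hα'def]
        split_ifs with c2
        · rw [c2]; omega
        · omega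
      · have hx : x = ⟨i, hi⟩ := Fin.ext hc
        rw [hx, monVec_at_eq' hi, monVec_at_eq' hi]
      · rw [monVec_at_gt α 0 x hc, monVec_at_gt α' 0 x hc]
    have h3 := (mem_iff_fF_le hIdeal hArt hi α' 0).mp h2
    omega
  · have h1 : monVec n i α (fF S i α) ∈ S := fF_mem hArt hi α
    have hji : (⟨l, hln⟩ : Fin n) < ⟨i, hi⟩ := Fin.lt_def.mpr (by exact hl)
    have hpos' : 0 < monVec n i α (fF S i α) ⟨i, hi⟩ := by
      rw [monVec_at_eq' hi]; exact hpos
    have h2 := hSS _ h1 ⟨l, hln⟩ ⟨i, hi⟩ hji hpos'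
    have heq : (fun x : Fin n => if x = ⟨l, hln⟩ then monVec n i α (fF S i α) ⟨l, hln⟩ + 1
        else if x = ⟨i, hi⟩ then monVec n i α (fF S i α) ⟨i, hi⟩ - 1
        else monVec n i α (fF S i α) x)
        = monVec n i α' (fF S i α - 1) := by
      funext x
      by_cases hx1 : x = (⟨l, hln⟩ : Fin n)
      · subst hx1
        rw [if_pos rfl, monVec_at_lt' hln α _ hl, monVec_at_lt' hln α' _ hl]
        simp only [hα'def, if_pos rfl]
      · rw [if_neg hx1]
        by_cases hx2 : x = (⟨i, hi⟩ : Fin n)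
        · subst hx2
          rw [if_pos rfl, monVec_at_eq' hi, monVec_at_eq' hi]
        · rw [if_neg hx2]
          have hxl : (x : ℕ) ≠ l := fun hh => hx1 (Fin.ext hh)
          have hxi : (x : ℕ) ≠ i := fun hh => hx2 (Fin.ext hh)
          rcases Nat.lt_or_ge (x : ℕ) i with hc | hc
          · rw [monVec_at_lt α _ x hc, monVec_at_lt α' _ x hc]
            simp only [hα'def]
            rw [if_neg hxl]
          · rw [monVec_at_gt α _ x (by omega), monVec_at_gt α' _ x (by omega)]
    rw [heq] at h2
    exact (mem_iff_fF_le hIdeal hArt hi α' _).mp h2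

lemma fF_move (hArt : IsArtinianMonomialSet S) (hSS : IsStronglyStable S)
    {i l m : ℕ} (hi : i < n) (hl : l < m) (hm : m < i) (α : ℕ → ℕ) (hαm : 0 < α m) :
    fF S i (fun x => if x = l then α l + 1 else if x = m then α m - 1 else α x)
      ≤ fF S i α := by
  set α' : ℕ → ℕ := fun x => if x = l then α l + 1 else if x = m then α m - 1 else α x
    with hα'def
  have hmn : m < n := lt_trans hm hi
  have hln : l < n := by omega
  have h1 : monVec n i α (fF S i α) ∈ S := fF_mem hArt hi α
  have hji : (⟨l, hln⟩ : Fin n) < ⟨m, hmn⟩ := Fin.lt_def.mpr (by exact hl)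
  have hpos' : 0 < monVec n i α (fF S i α) ⟨m, hmn⟩ := by
    rw [monVec_at_lt' hmn α _ hm]; exact hαm
  have h2 := hSS _ h1 ⟨l, hln⟩ ⟨m, hmn⟩ hji hpos'
  have heq : (fun x : Fin n => if x = ⟨l, hln⟩ then monVec n i α (fF S i α) ⟨l, hln⟩ + 1
      else if x = ⟨m, hmn⟩ then monVec n i α (fF S i α) ⟨m, hmn⟩ - 1
      else monVec n i α (fF S i α) x)
      = monVec n i α' (fF S i α) := by
    funext x
    by_cases hx1 : x = (⟨l, hln⟩ : Fin n)
    · subst hx1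
      rw [if_pos rfl, monVec_at_lt' hln α _ (by omega), monVec_at_lt' hln α' _ (by omega)]
      simp only [hα'def, if_pos rfl]
    · rw [if_neg hx1]
      by_cases hx2 : x = (⟨m, hmn⟩ : Fin n)
      · subst hx2
        rw [if_pos rfl, monVec_at_lt' hmn α _ hm, monVec_at_lt' hmn α' _ hm]
        simp only [hα'def]
        simp [show m ≠ l from by omega]
      · rw [if_neg hx2]
        have hxl : (x : ℕ) ≠ l := fun hh => hx1 (Fin.ext hh)
        have hxm : (x : ℕ) ≠ m := fun hh => hx2 (Fin.ext hh)
        rcases Nat.lt_trichotomy (x : ℕ) i with hc | hc | hc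
        · rw [monVec_at_lt α _ x hc, monVec_at_lt α' _ x hc]
          simp only [hα'def]
          rw [if_neg hxl, if_neg hxm]
        · have hx : x = ⟨i, hi⟩ := Fin.ext hc
          rw [hx, monVec_at_eq' hi, monVec_at_eq' hi]
        · rw [monVec_at_gt α _ x hc, monVec_at_gt α' _ x hc]
  rw [heq] at h2
  exact Nat.sInf_le h2

lemma fF_last_mono (hIdeal : IsMonomialIdeal S) (hArt : IsArtinianMonomialSet S)
    {i : ℕ} (hi : i < n) {s s' : ℕ} (h : s ≤ s') :
    fF S i (lastVec i s') ≤ fF S i (lastVec i s) := by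
  rw [← mem_iff_fF_le hIdeal hArt hi]
  apply mem_of_le hIdeal (fF_mem hArt hi (lastVec i s))
  intro x
  simp only [monVec, lastVec]
  split_ifs <;> omega

lemma fF_last_step (hIdeal : IsMonomialIdeal S) (hArt : IsArtinianMonomialSet S)
    (hSS : IsStronglyStable S) {i : ℕ} (h1 : 1 ≤ i) (hi : i < n) (s : ℕ) :
    fF S i (lastVec i (s + 1)) ≤ fF S i (lastVec i s) - 1 := by
  have h := fF_step hIdeal hArt hSS hi (show i - 1 < i by omega) (lastVec i s)
  have heq : (fun x => if x = i - 1 then lastVec i s (i - 1) + 1 else lastVec i s x)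
      = lastVec i (s + 1) := by
    funext x
    simp only [lastVec]
    split_ifs with c1 <;> simp [c1]
  rwa [heq] at h

lemma fF_last_add (hIdeal : IsMonomialIdeal S) (hArt : IsArtinianMonomialSet S)
    (hSS : IsStronglyStable S) {i : ℕ} (h1 : 1 ≤ i) (hi : i < n) (s k : ℕ) :
    fF S i (lastVec i (s + k)) ≤ fF S i (lastVec i s) - k := by
  induction k with
  | zero => simp
  | succ k ih =>
    have h := fF_last_step hIdeal hArt hSS h1 hi (s + k)
    have hg : s + (k + 1) = (s + k) + 1 := rfl
    rw [hg]
    omega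

lemma fF_le_fF_last (hIdeal : IsMonomialIdeal S) (hArt : IsArtinianMonomialSet S)
    (hSS : IsStronglyStable S) {i : ℕ} (h1 : 1 ≤ i) (hi : i < n) (α : ℕ → ℕ) :
    fF S i α ≤ fF S i (lastVec i (asum i α)) := by
  obtain ⟨j, rfl⟩ : ∃ j, i = j + 1 := ⟨i - 1, by omega⟩
  have hjn : j + 1 < n := hi
  clear h1 hi
  suffices H : ∀ K (α : ℕ → ℕ), asum j α = K →
      fF S (j + 1) α ≤ fF S (j + 1) (lastVec (j + 1) (asum (j + 1) α)) by
    exact H _ α rfl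
  intro K
  induction K with
  | zero =>
    intro α h0
    have hz : ∀ l, l < j → α l = 0 := by
      intro l hl
      unfold asum at h0
      exact Finset.sum_eq_zero_iff.mp h0 l (Finset.mem_range.mpr hl)
    have hs : asum (j + 1) α = α j := by
      rw [asum_succ, h0, Nat.zero_add]
    apply le_of_eq
    apply fF_congr
    intro l hl
    simp only [lastVec, Nat.add_sub_cancel]
    by_cases hlj : l = j
    · rw [if_pos hlj, hlj, hs]
    · rw [if_neg hlj, hz l (by omega)]
  | succ K ih =>
    intro α hK
    have hex : ∃ l, l < j ∧ 0 < α l := by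
      by_contra hc
      push_neg at hc
      have hz : asum j α = 0 := by
        unfold asum
        apply Finset.sum_eq_zero
        intro l hl
        have := hc l (Finset.mem_range.mp hl)
        omega
      omega
    obtain ⟨l, hl, hαl⟩ := hex
    set α' : ℕ → ℕ := fun x => if x = j then α j + 1 else if x = l then α l - 1 else α x
      with hα'def
    have hα'l : α' l = α l - 1 := by
      simp only [hα'def]
      rw [if_neg (by omega)]
      simp
    have hα'j : α' j = α j + 1 := by
      simp only [hα'def]
      simp
    have hlmem : l ∈ Finset.range j := Finset.mem_range.mpr hl
    have e1 := Finset.sum_erase_add (Finset.range j) α' hlmem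
    have e2 := Finset.sum_erase_add (Finset.range j) α hlmem
    have e3 : ∑ x ∈ (Finset.range j).erase l, α' x = ∑ x ∈ (Finset.range j).erase l, α x := by
      apply Finset.sum_congr rfl
      intro x hx
      obtain ⟨hxl, hxr⟩ := Finset.mem_erase.mp hx
      have hxj : x < j := Finset.mem_range.mp hxr
      simp only [hα'def]
      rw [if_neg (by omega), if_neg hxl]
    have hsum2 : asum j α' = K := by
      have g1 : asum j α' = ∑ x ∈ (Finset.range j).erase l, α' x + α' l := e1.symm
      have g2 : asum j α = ∑ x ∈ (Finset.range j).erase l, α x + α l := e2.symm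
      rw [g1, e3, hα'l]
      rw [g2] at hK
      omega
    have hsum1 : asum (j + 1) α' = asum (j + 1) α := by
      rw [asum_succ, asum_succ, hα'j, hsum2]
      omega
    have hstep : fF S (j + 1) α ≤ fF S (j + 1) α' := by
      have hmv := fF_move hArt hSS hjn hl (show j < j + 1 by omega) α' (by rw [hα'j]; omega)
      have heq : (fun x => if x = l then α' l + 1 else if x = j then α' j - 1 else α' x) = α := by
        funext x
        by_cases hx1 : x = l
        · subst hx1
          rw [if_pos rfl, hα'l]
          omega
        · rw [if_neg hx1]
          by_cases hx2 : x = j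
          · subst hx2
            rw [if_pos rfl, hα'j]
            omega
          · rw [if_neg hx2]
            simp only [hα'def]
            rw [if_neg hx2, if_neg hx1]
      rwa [heq] at hmv
    calc fF S (j + 1) α ≤ fF S (j + 1) α' := hstep
      _ ≤ fF S (j + 1) (lastVec (j + 1) (asum (j + 1) α')) := ih α' hsum2
      _ = fF S (j + 1) (lastVec (j + 1) (asum (j + 1) α)) := by rw [hsum1]

def liftV {n : ℕ} (M : Fin n → ℕ) : ℕ → ℕ := fun l => if h : l < n then M ⟨l, h⟩ else 0

lemma liftV_coe (M : Fin n → ℕ) (l : Fin n) : liftV M (l : ℕ) = M l := by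
  simp only [liftV]
  rw [dif_pos l.isLt, Fin.eta]

lemma liftV_at {M : Fin n → ℕ} {q : ℕ} (hq : q < n) : liftV M q = M ⟨q, hq⟩ := by
  simp only [liftV]
  rw [dif_pos hq]

lemma monVec_liftV_le (M : Fin n → ℕ) {q : ℕ} (hq : q < n) (t : ℕ) (ht : t ≤ M ⟨q, hq⟩) :
    ∀ l, monVec n q (liftV M) t l ≤ M l := by
  intro l
  rcases Nat.lt_trichotomy (l : ℕ) q with hc | hc | hc
  · rw [monVec_at_lt _ _ l hc, liftV_coe]
  · have hx : l = ⟨q, hq⟩ := Fin.ext hc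
    rw [hx, monVec_at_eq' hq]
    exact ht
  · rw [monVec_at_gt _ _ l hc]
    omega

lemma std_of_not_mem (hIdeal : IsMonomialIdeal S) (hArt : IsArtinianMonomialSet S)
    {M : Fin n → ℕ} (hM : M ∉ S) :
    ∀ q (hq : q < n), M ⟨q, hq⟩ < fF S q (liftV M) := by
  intro q hq
  by_contra hc
  push_neg at hc
  have h1 : monVec n q (liftV M) (M ⟨q, hq⟩) ∈ S := (mem_iff_fF_le hIdeal hArt hq _ _).mpr hc
  exact hM (mem_of_le hIdeal h1 (monVec_liftV_le M hq _ le_rfl))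

lemma exists_minGen_le (hIdeal : IsMonomialIdeal S) :
    ∀ d (m : Fin n → ℕ), mdeg m ≤ d → m ∈ S → ∃ N, IsMinGen S N ∧ ∀ l, N l ≤ m l := by
  intro d
  induction d with
  | zero =>
    intro m hd hm
    refine ⟨m, ⟨hm, ?_⟩, fun l => le_rfl⟩
    intro m' hm' hle
    funext l
    have h1 : mdeg m = 0 := Nat.le_zero.mp hd
    unfold mdeg at h1
    have h2 : m l = 0 := Finset.sum_eq_zero_iff.mp h1 l (Finset.mem_univ l)
    have := hle l
    omega
  | succ d ih =>
    intro m hd hm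
    by_cases hmin : ∀ m' ∈ S, (∀ l, m' l ≤ m l) → m' = m
    · exact ⟨m, ⟨hm, hmin⟩, fun l => le_rfl⟩
    · push_neg at hmin
      obtain ⟨m', hm'S, hle, hne⟩ := hmin
      have hdeg : mdeg m' < mdeg m := by
        have hex : ∃ l, m' l ≠ m l := by
          by_contra h
          push_neg at h
          exact hne (funext h)
        obtain ⟨l0, hl0⟩ := hex
        unfold mdeg
        exact Finset.sum_lt_sum (fun l _ => hle l)
          ⟨l0, Finset.mem_univ l0, lt_of_le_of_ne (hle l0) hl0⟩
      obtain ⟨N, hN, hNle⟩ := ih m' (by omega) hm'S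
      exact ⟨N, hN, fun l => le_trans (hNle l) (hle l)⟩

lemma minGen_facts (hIdeal : IsMonomialIdeal S) (hArt : IsArtinianMonomialSet S)
    {N : Fin n → ℕ} (hN : IsMinGen S N)
    {j : ℕ} (hj : j < n) (hsupp : ∀ l : Fin n, j < (l : ℕ) → N l = 0)
    (hNj : 0 < N ⟨j, hj⟩) :
    (∀ q, q < j → liftV N q < fF S q (liftV N)) ∧ fF S j (liftV N) = N ⟨j, hj⟩ ∧
      monVec n j (liftV N) (N ⟨j, hj⟩) = N := by
  obtain ⟨hNS, hmin⟩ := hN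
  have hNeq : monVec n j (liftV N) (N ⟨j, hj⟩) = N := by
    funext l
    rcases Nat.lt_trichotomy (l : ℕ) j with hc | hc | hc
    · rw [monVec_at_lt _ _ l hc, liftV_coe]
    · have hx : l = ⟨j, hj⟩ := Fin.ext hc
      rw [hx, monVec_at_eq' hj]
    · rw [monVec_at_gt _ _ l hc]
      exact (hsupp l hc).symm
  refine ⟨?_, ?_, hNeq⟩
  · intro q hq
    by_contra hc
    push_neg at hc
    have hqn : q < n := lt_trans hq hj
    have h1 : monVec n q (liftV N) (N ⟨q, hqn⟩) ∈ S := by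
      rw [mem_iff_fF_le hIdeal hArt hqn, ← liftV_at (M := N) hqn]
      exact hc
    have h2 := hmin _ h1 (monVec_liftV_le N hqn _ le_rfl)
    have h3 := congrFun h2 ⟨j, hj⟩
    rw [monVec_at_gt _ _ _ (show q < ((⟨j, hj⟩ : Fin n) : ℕ) from hq)] at h3
    omega
  · have hle : fF S j (liftV N) ≤ N ⟨j, hj⟩ := by
      apply Nat.sInf_le
      show monVec n j (liftV N) (N ⟨j, hj⟩) ∈ S
      rw [hNeq]
      exact hNS
    rcases Nat.lt_or_ge (fF S j (liftV N)) (N ⟨j, hj⟩) with hlt | hge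
    · exfalso
      have h1 : monVec n j (liftV N) (N ⟨j, hj⟩ - 1) ∈ S :=
        (mem_iff_fF_le hIdeal hArt hj _ _).mpr (by omega)
      have h2 := hmin _ h1 (monVec_liftV_le N hj _ (by omega))
      have h3 := congrFun h2 ⟨j, hj⟩
      rw [monVec_at_eq' hj] at h3
      omega
    · omega

lemma keyPrefix (hIdeal : IsMonomialIdeal S) (hArt : IsArtinianMonomialSet S)
    (hARL : AlmostRevLex S) {i : ℕ} (h1 : 1 ≤ i) (hi : i < n)
    {α : ℕ → ℕ} (hα : α ∈ JSet S i) :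
    1 ≤ fF S i α ∧ ∃ g, g ≤ asum i α ∧
      fF S i (lastVec i (g + 1)) + 1 ≤ fF S i α ∧
      (g = asum i α → IsMinGen S (monVec n i α (fF S i α))) := by
  obtain ⟨hα0, hαJ⟩ := hα
  have htpos : 1 ≤ fF S i α := by
    by_contra hc
    push_neg at hc
    have h0 : monVec n i α 0 ∈ S := by
      rw [mem_iff_fF_le hIdeal hArt hi]; omega
    have h1' : monVec n (i - 1) α (α (i - 1)) ∈ S := by
      apply mem_of_le hIdeal h0
      intro x
      rcases Nat.lt_trichotomy (x : ℕ) (i - 1) with hc1 | hc1 | hc1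
      · rw [monVec_at_lt α 0 x (by omega), monVec_at_lt α _ x hc1]
      · have hx : x = ⟨i - 1, by omega⟩ := Fin.ext hc1
        rw [hx, monVec_at_lt' (by omega) α 0 (by omega), monVec_at_eq' (by omega) α _]
      · rw [monVec_at_gt α (α (i - 1)) x hc1]
        rcases Nat.lt_or_ge (x : ℕ) i with hc2 | hc2
        · omega
        · rcases Nat.eq_or_lt_of_le hc2 with hc3 | hc3
          · have hx : x = ⟨i, hi⟩ := Fin.ext hc3.symm
            rw [hx, monVec_at_eq' hi]
          · rw [monVec_at_gt α 0 x hc3]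
    have h2 := hαJ (i - 1) (by omega)
    rw [mem_iff_fF_le hIdeal hArt (show i - 1 < n by omega)] at h1'
    omega
  have hmα : monVec n i α (fF S i α) ∈ S := fF_mem hArt hi α
  obtain ⟨N, hNmin, hNle⟩ :=
    exists_minGen_le hIdeal (mdeg (monVec n i α (fF S i α))) _ le_rfl hmα
  have hNi : N ⟨i, hi⟩ = fF S i α := by
    have hle : N ⟨i, hi⟩ ≤ fF S i α := by
      have h2 := hNle ⟨i, hi⟩
      rwa [monVec_at_eq' hi] at h2
    by_contra hc
    have h3 : monVec n i α (fF S i α - 1) ∈ S := by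
      apply mem_of_le hIdeal hNmin.1
      intro l
      rcases Nat.lt_trichotomy (l : ℕ) i with hc1 | hc1 | hc1
      · rw [monVec_at_lt α _ l hc1]
        have h4 := hNle l
        rwa [monVec_at_lt α _ l hc1] at h4
      · have hx : l = ⟨i, hi⟩ := Fin.ext hc1
        rw [hx, monVec_at_eq' hi]
        omega
      · rw [monVec_at_gt α _ l hc1]
        have h4 := hNle l
        rwa [monVec_at_gt α _ l hc1] at h4
    rw [mem_iff_fF_le hIdeal hArt hi] at h3
    omega
  have hN0 : ∀ l : Fin n, i < (l : ℕ) → N l = 0 := by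
    intro l hl
    have h2 := hNle l
    rw [monVec_at_gt α _ l hl] at h2
    omega
  have hγle : ∀ q, q < i → liftV N q ≤ α q := by
    intro q hq
    have hqn : q < n := lt_trans hq hi
    have h2 := hNle ⟨q, hqn⟩
    rw [monVec_at_lt' hqn α _ hq] at h2
    rw [liftV_at hqn]
    exact h2
  have hgle : asum i (liftV N) ≤ asum i α :=
    Finset.sum_le_sum (fun q hq => hγle q (Finset.mem_range.mp hq))
  have hNeq : N = monVec n i (liftV N) (fF S i α) := by
    funext l
    rcases Nat.lt_trichotomy (l : ℕ) i with hc | hc | hc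
    · rw [monVec_at_lt _ _ l hc, liftV_coe]
    · have hx : l = ⟨i, hi⟩ := Fin.ext hc
      rw [hx, monVec_at_eq' hi, hNi]
    · rw [monVec_at_gt _ _ l hc]
      exact hN0 l hc
  have hdegN : mdeg N = asum i (liftV N) + fF S i α := by
    have h := mdeg_monVec hi (liftV N) (fF S i α)
    rw [← hNeq] at h
    exact h
  have hM3 : monVec n i (lastVec i (asum i (liftV N) + 1)) (fF S i α - 1) ∈ S := by
    apply hARL _ N hNmin
    · rw [mdeg_monVec hi, asum_lastVec h1, hdegN]
      omega
    · refine ⟨⟨i, hi⟩, ?_, ?_⟩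
      · rw [monVec_at_eq' hi, hNi]
        omega
      · intro l hl
        rw [monVec_at_gt _ _ l hl, hN0 l hl]
  have hlast : fF S i (lastVec i (asum i (liftV N) + 1)) + 1 ≤ fF S i α := by
    rw [mem_iff_fF_le hIdeal hArt hi] at hM3
    omega
  refine ⟨htpos, asum i (liftV N), hgle, hlast, ?_⟩
  intro hgs
  have hγeq : ∀ q, q < i → liftV N q = α q := by
    by_contra hc
    push_neg at hc
    obtain ⟨q0, hq0, hne⟩ := hc
    have hlt : asum i (liftV N) < asum i α :=
      Finset.sum_lt_sum (fun q hq => hγle q (Finset.mem_range.mp hq))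
        ⟨q0, Finset.mem_range.mpr hq0, lt_of_le_of_ne (hγle q0 hq0) hne⟩
    omega
  have heq2 : monVec n i (liftV N) (fF S i α) = monVec n i α (fF S i α) :=
    monVec_congr hγeq _
  rw [← heq2, ← hNeq]
  exact hNmin

end ARLAux

open ARLAux in
/-- Lemma: equivalent condition for being almost reverse
lexicographic.  A strongly stable Artinian monomial ideal `J` in
`k[x_1,…,x_n]` is almost reverse lexicographic iff for every `1 ≤ i ≤ n-1`:
(1) `f_{i+1}(0,…,0,|α|+1) + 1 ≤ f_{i+1}(α)` for every `α ∈ J_i`, and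
(2) `f_{i+1}(β) ≤ f_{i+1}(α)` for all `α, β ∈ J_i` with `|α| = |β|` and
`α < β` in reverse lexicographic order. -/
theorem almostRevLex_iff_fF_conditions
    {n : ℕ} (S : Set (Fin n → ℕ))
    (hIdeal : IsMonomialIdeal S) (hArt : IsArtinianMonomialSet S)
    (hSS : IsStronglyStable S) :
    AlmostRevLex S ↔
      ∀ i, 1 ≤ i → i ≤ n - 1 →
        (∀ α ∈ JSet S i, fF S i (lastVec i (asum i α + 1)) + 1 ≤ fF S i α) ∧
        (∀ α ∈ JSet S i, ∀ β ∈ JSet S i,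
          asum i α = asum i β → RevLexLT' α β → fF S i β ≤ fF S i α) := by
  constructor
  · -- forward direction
    intro hARL i h1i hin
    have hi : i < n := by omega
    constructor
    · intro α hα
      obtain ⟨htpos, g, hgle, hlast, -⟩ := keyPrefix hIdeal hArt hARL h1i hi hα
      have hmono := fF_last_mono hIdeal hArt hi (show g + 1 ≤ asum i α + 1 by omega)
      omega
    · intro α hα β hβ hsum hrl
      obtain ⟨htpos, g, hgle, hlast, hming⟩ := keyPrefix hIdeal hArt hARL h1i hi hα
      rcases eq_or_lt_of_le hgle with hgs | hgs
      · have hmin := hming hgs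
        obtain ⟨j0, hj0lt, hj0agree⟩ := hrl
        have hj0i : j0 < i := by
          by_contra hc
          push_neg at hc
          have h2 := hα.1 j0 hc
          omega
        have hj0n : j0 < n := lt_trans hj0i hi
        have hM2 : monVec n i β (fF S i α) ∈ S := by
          apply hARL _ _ hmin
          · rw [mdeg_monVec hi, mdeg_monVec hi, hsum]
          · refine ⟨⟨j0, hj0n⟩, ?_, ?_⟩
            · rw [monVec_at_lt' hj0n β _ hj0i, monVec_at_lt' hj0n α _ hj0i]
              exact hj0lt
            · intro l hl
              rcases Nat.lt_trichotomy (l : ℕ) i with hc | hc | hc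
              · rw [monVec_at_lt α _ l hc, monVec_at_lt β _ l hc]
                exact hj0agree (l : ℕ) hl
              · have hx : l = ⟨i, hi⟩ := Fin.ext hc
                rw [hx, monVec_at_eq' hi, monVec_at_eq' hi]
              · rw [monVec_at_gt α _ l hc, monVec_at_gt β _ l hc]
        rw [mem_iff_fF_le hIdeal hArt hi] at hM2
        exact hM2
      · have hss4 := fF_le_fF_last hIdeal hArt hSS h1i hi β
        have hmono := fF_last_mono hIdeal hArt hi (show g + 1 ≤ asum i β by omega)
        omega
  · -- backward direction
    intro hcond M N hNmin hdeg hrl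
    obtain ⟨p, hp1, hp2⟩ := hrl
    by_contra hM
    have hMstd := std_of_not_mem hIdeal hArt hM
    have hsne : (Finset.univ.filter (fun l : Fin n => N l ≠ 0)).Nonempty :=
      ⟨p, by simp only [Finset.mem_filter, Finset.mem_univ, true_and]; omega⟩
    set J := (Finset.univ.filter (fun l : Fin n => N l ≠ 0)).max' hsne with hJdef
    have hJmem : N J ≠ 0 := by
      have h := Finset.max'_mem _ hsne
      rw [Finset.mem_filter] at h
      exact h.2
    have hJmax : ∀ l : Fin n, N l ≠ 0 → l ≤ J := fun l hl =>
      Finset.le_max' _ l (Finset.mem_filter.mpr ⟨Finset.mem_univ l, hl⟩)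
    have hsupp : ∀ l : Fin n, (J : ℕ) < (l : ℕ) → N l = 0 := by
      intro l hl
      by_contra hc
      have h2 := hJmax l hc
      rw [Fin.le_def] at h2
      omega
    have hjn : (J : ℕ) < n := J.isLt
    have hJmk : (⟨(J : ℕ), hjn⟩ : Fin n) = J := Fin.eta J hjn
    have hNJpos : 0 < N ⟨(J : ℕ), hjn⟩ := by
      rw [hJmk]
      omega
    obtain ⟨hNstd, hNf, hNveq⟩ := minGen_facts hIdeal hArt hNmin hjn hsupp hNJpos
    have hpJ : (p : ℕ) ≤ (J : ℕ) := by
      have h2 := hJmax p (by omega)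
      rw [Fin.le_def] at h2
      exact h2
    set γt : ℕ → ℕ := fun l => if l < (J : ℕ) then liftV N l else 0 with hγtdef
    have hγtJ : γt ∈ JSet S (J : ℕ) := by
      refine ⟨?_, ?_⟩
      · intro l hl
        simp only [hγtdef]
        rw [if_neg (by omega)]
      · intro q hq
        have hcongr : fF S q γt = fF S q (liftV N) := by
          apply fF_congr
          intro l hl
          simp only [hγtdef]
          rw [if_pos (by omega)]
        have h2 : γt q = liftV N q := by
          simp only [hγtdef]
          rw [if_pos hq]
        rw [hcongr, h2]
        exact hNstd q hq
    have hγtsum : asum (J : ℕ) γt = asum (J : ℕ) (liftV N) := by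
      apply Finset.sum_congr rfl
      intro l hl
      simp only [hγtdef]
      rw [if_pos (Finset.mem_range.mp hl)]
    have hfγt : fF S (J : ℕ) γt = N ⟨(J : ℕ), hjn⟩ := by
      rw [← hNf]
      apply fF_congr
      intro l hl
      simp only [hγtdef]
      rw [if_pos hl]
    have hdegN : mdeg N = asum (J : ℕ) (liftV N) + N ⟨(J : ℕ), hjn⟩ := by
      have h := mdeg_monVec hjn (liftV N) (N ⟨(J : ℕ), hjn⟩)
      rw [hNveq] at h
      exact h
    rcases eq_or_lt_of_le hpJ with hpeq | hplt
    · -- case p = J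
      have hPJ : p = J := Fin.ext hpeq
      have hMgt : ∀ l : Fin n, (J : ℕ) < (l : ℕ) → M l = 0 := by
        intro l hl
        rw [← hp2 l (Fin.lt_def.mpr (by omega))]
        exact hsupp l hl
      have hMeq : monVec n (J : ℕ) (liftV M) (M ⟨(J : ℕ), hjn⟩) = M := by
        funext l
        rcases Nat.lt_trichotomy (l : ℕ) (J : ℕ) with hc | hc | hc
        · rw [monVec_at_lt _ _ l hc, liftV_coe]
        · have hx : l = ⟨(J : ℕ), hjn⟩ := Fin.ext hc
          rw [hx, monVec_at_eq' hjn]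
        · rw [monVec_at_gt _ _ l hc]
          exact (hMgt l hc).symm
      have hdegM := mdeg_monVec hjn (liftV M) (M ⟨(J : ℕ), hjn⟩)
      rw [hMeq] at hdegM
      have hMJlt : M ⟨(J : ℕ), hjn⟩ < N ⟨(J : ℕ), hjn⟩ := by
        rw [hJmk]
        rw [hPJ] at hp1
        exact hp1
      have hj1 : 1 ≤ (J : ℕ) := by
        by_contra hc
        push_neg at hc
        have hJ0 : (J : ℕ) = 0 := by omega
        have h0 : asum (J : ℕ) (liftV M) = 0 := by
          rw [hJ0]
          simp [asum]
        have h0' : asum (J : ℕ) (liftV N) = 0 := by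
          rw [hJ0]
          simp [asum]
        omega
      obtain ⟨hc1, -⟩ := hcond (J : ℕ) hj1 (by omega)
      have h1 := hc1 γt hγtJ
      rw [hγtsum, hfγt] at h1
      have h2 := hMstd (J : ℕ) hjn
      have h3 := fF_le_fF_last hIdeal hArt hSS hj1 hjn (liftV M)
      have hk : asum (J : ℕ) (liftV N) + 1 +
          (asum (J : ℕ) (liftV M) - (asum (J : ℕ) (liftV N) + 1)) =
          asum (J : ℕ) (liftV M) := by omega
      have h4 := fF_last_add hIdeal hArt hSS hj1 hjn (asum (J : ℕ) (liftV N) + 1)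
        (asum (J : ℕ) (liftV M) - (asum (J : ℕ) (liftV N) + 1))
      rw [hk] at h4
      omega
    · -- case p < J
      have hMagree : ∀ l : Fin n, (p : ℕ) < (l : ℕ) → M l = N l := fun l hl =>
        (hp2 l (Fin.lt_def.mpr hl)).symm
      have hMJ : M ⟨(J : ℕ), hjn⟩ = N ⟨(J : ℕ), hjn⟩ := hMagree _ hplt
      have hMgt : ∀ l : Fin n, (J : ℕ) < (l : ℕ) → M l = 0 := by
        intro l hl
        rw [hMagree l (by omega)]
        exact hsupp l hl
      have hMeq : monVec n (J : ℕ) (liftV M) (M ⟨(J : ℕ), hjn⟩) = M := by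
        funext l
        rcases Nat.lt_trichotomy (l : ℕ) (J : ℕ) with hc | hc | hc
        · rw [monVec_at_lt _ _ l hc, liftV_coe]
        · have hx : l = ⟨(J : ℕ), hjn⟩ := Fin.ext hc
          rw [hx, monVec_at_eq' hjn]
        · rw [monVec_at_gt _ _ l hc]
          exact (hMgt l hc).symm
      have hdegM := mdeg_monVec hjn (liftV M) (M ⟨(J : ℕ), hjn⟩)
      rw [hMeq] at hdegM
      have hsums : asum (J : ℕ) (liftV M) = asum (J : ℕ) (liftV N) := by omega
      set μt : ℕ → ℕ := fun l => if l < (J : ℕ) then liftV M l else 0 with hμtdef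
      have hμtJ : μt ∈ JSet S (J : ℕ) := by
        refine ⟨?_, ?_⟩
        · intro l hl
          simp only [hμtdef]
          rw [if_neg (by omega)]
        · intro q hq
          have hqn : q < n := lt_trans hq hjn
          have hcongr : fF S q μt = fF S q (liftV M) := by
            apply fF_congr
            intro l hl
            simp only [hμtdef]
            rw [if_pos (by omega)]
          have h2 : μt q = liftV M q := by
            simp only [hμtdef]
            rw [if_pos hq]
          rw [hcongr, h2, liftV_at hqn]
          exact hMstd q hqn
      have hμtsum : asum (J : ℕ) μt = asum (J : ℕ) (liftV M) := by
        apply Finset.sum_congr rfl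
        intro l hl
        simp only [hμtdef]
        rw [if_pos (Finset.mem_range.mp hl)]
      have hfμt : fF S (J : ℕ) μt = fF S (J : ℕ) (liftV M) := by
        apply fF_congr
        intro l hl
        simp only [hμtdef]
        rw [if_pos hl]
      have hrl' : RevLexLT' γt μt := by
        refine ⟨(p : ℕ), ?_, ?_⟩
        · simp only [hμtdef, hγtdef]
          rw [if_pos hplt, if_pos hplt, liftV_coe, liftV_coe]
          exact hp1
        · intro l hl
          by_cases hlj : l < (J : ℕ)
          · have hln2 : l < n := lt_trans hlj hjn
            simp only [hμtdef, hγtdef]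
            rw [if_pos hlj, if_pos hlj, liftV_at (M := N) hln2, liftV_at (M := M) hln2]
            exact (hMagree ⟨l, hln2⟩ hl).symm
          · simp only [hμtdef, hγtdef]
            rw [if_neg hlj, if_neg hlj]
      have hj1 : 1 ≤ (J : ℕ) := by omega
      obtain ⟨-, hc2⟩ := hcond (J : ℕ) hj1 (by omega)
      have h6 := hc2 γt hγtJ μt hμtJ (by rw [hγtsum, hμtsum, hsums]) hrl'
      rw [hfγt, hfμt] at h6
      have h7 := hMstd (J : ℕ) hjn
      omega
end

section
/- Let J be a strongly stable Artinian monomial ideal in S = k[x_1,x_2,x_3]. Then J is almost reverse lexicographic if and only if f_3(0,|α|+1) + 1 ≤ f_3(α) for every α = (α_1,α_2) ∈ J_2. (This is the monomial-ideal content of the paper's Proposition: for a homogeneous Artinian ideal I of k[x_1,x_2,x_3] in characteristic 0, S/I has the strong Lefschetz property if and only if gin(I) is almost reverse lexicographic.) -/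
namespace ARL3

noncomputable def f (S : Set (Fin 3 → ℕ)) (a b : ℕ) : ℕ := sInf {t | ![a, b, t] ∈ S}

variable {S : Set (Fin 3 → ℕ)}

lemma vec_eta (m : Fin 3 → ℕ) : ![m 0, m 1, m 2] = m := by
  funext l; fin_cases l <;> simp

lemma nonempty_aux (hArt : IsArtinianMonomialSet S) (g : ℕ → Fin 3 → ℕ)
    (hg : Function.Injective g) : {t | g t ∈ S}.Nonempty := by
  by_contra h
  rw [Set.not_nonempty_iff_eq_empty] at h
  have hsub : Set.range g ⊆ Sᶜ := by
    rintro _ ⟨t, rfl⟩ hmem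
    have : t ∈ {t | g t ∈ S} := hmem
    simp [h] at this
  exact (Set.infinite_range_of_injective hg).mono hsub hArt

lemma ne_last (hArt : IsArtinianMonomialSet S) (a b : ℕ) :
    {t | ![a, b, t] ∈ S}.Nonempty := by
  apply nonempty_aux hArt
  intro s t h
  simpa using congrFun h 2

lemma f_spec (hArt : IsArtinianMonomialSet S) (a b : ℕ) : ![a, b, f S a b] ∈ S :=
  Nat.sInf_mem (ne_last hArt a b)

lemma mem_f (hIdeal : IsMonomialIdeal S) (hArt : IsArtinianMonomialSet S)
    {a b c : ℕ} : ![a, b, c] ∈ S ↔ f S a b ≤ c := by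
  constructor
  · intro h; exact Nat.sInf_le h
  · intro h
    have h2 := hIdeal _ (f_spec hArt a b) ![0, 0, c - f S a b]
    have h3 : ![a, b, f S a b] + ![0, 0, c - f S a b] = ![a, b, c] := by
      funext l; fin_cases l <;> simp <;> omega
    rwa [h3] at h2

lemma f_mono (hIdeal : IsMonomialIdeal S) (hArt : IsArtinianMonomialSet S)
    {a b a' b' : ℕ} (ha : a ≤ a') (hb : b ≤ b') : f S a' b' ≤ f S a b := by
  apply Nat.sInf_le
  have h2 := hIdeal _ (f_spec hArt a b) ![a' - a, b' - b, 0]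
  have h3 : ![a, b, f S a b] + ![a' - a, b' - b, 0] = ![a', b', f S a b] := by
    funext l; fin_cases l <;> simp <;> omega
  rwa [h3] at h2

lemma f_swap_xy (hSS : IsStronglyStable S) (hArt : IsArtinianMonomialSet S)
    (a b : ℕ) : f S (a + 1) b ≤ f S a (b + 1) := by
  apply Nat.sInf_le
  have hm := f_spec hArt a (b + 1)
  have h2 := hSS _ hm 0 1 (by decide) (by simp)
  have h3 : (fun l => if l = 0 then ![a, b+1, f S a (b+1)] 0 + 1
      else if l = 1 then ![a, b+1, f S a (b+1)] 1 - 1 else ![a, b+1, f S a (b+1)] l)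
      = ![a + 1, b, f S a (b + 1)] := by
    funext l; fin_cases l <;> simp
  rwa [h3] at h2

lemma f_le_zero_diag (hSS : IsStronglyStable S) (hArt : IsArtinianMonomialSet S) :
    ∀ a b, f S a b ≤ f S 0 (a + b) := by
  intro a
  induction a with
  | zero => intro b; simp
  | succ n ih =>
    intro b
    have h1 := f_swap_xy hSS hArt n b
    have h2 := ih (b + 1)
    have e : n + (b + 1) = n + 1 + b := by omega
    rw [e] at h2
    omega

lemma f_antidiag (hSS : IsStronglyStable S) (hArt : IsArtinianMonomialSet S)
    (a b : ℕ) : ∀ k, k ≤ b → f S (a + k) (b - k) ≤ f S a b := by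
  intro k
  induction k with
  | zero => simp
  | succ n ih =>
    intro h
    have h1 : f S (a + n + 1) (b - (n + 1)) ≤ f S (a + n) (b - n) := by
      have h2 := f_swap_xy hSS hArt (a + n) (b - (n + 1))
      have e : b - (n + 1) + 1 = b - n := by omega
      rwa [e] at h2
    have h3 := ih (by omega)
    have e : a + (n + 1) = a + n + 1 := by omega
    rw [e]
    omega

lemma f_zero_step (hIdeal : IsMonomialIdeal S) (hSS : IsStronglyStable S)
    (hArt : IsArtinianMonomialSet S) (s : ℕ) : f S 0 (s + 1) ≤ f S 0 s - 1 := by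
  rcases Nat.eq_zero_or_pos (f S 0 s) with h | h
  · have h1 : ![0, s, 0] ∈ S := (mem_f hIdeal hArt).mpr (by omega)
    have h2 : f S 0 (s + 1) ≤ 0 := (mem_f hIdeal hArt).mp (by
      have h3 := hIdeal _ h1 ![0, 1, 0]
      have h4 : ![0, s, 0] + ![0, 1, 0] = ![0, s + 1, (0:ℕ)] := by
        funext l; fin_cases l <;> simp
      rwa [h4] at h3)
    omega
  · have hm := f_spec hArt 0 s
    have h2 := hSS _ hm 1 2 (by decide) (by simpa using h)
    have h3 : (fun l => if l = 1 then ![0, s, f S 0 s] 1 + 1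
        else if l = 2 then ![0, s, f S 0 s] 2 - 1 else ![0, s, f S 0 s] l)
        = ![0, s + 1, f S 0 s - 1] := by
      funext l; fin_cases l <;> simp
    rw [h3] at h2
    exact Nat.sInf_le h2

lemma f_zero_iter (hIdeal : IsMonomialIdeal S) (hSS : IsStronglyStable S)
    (hArt : IsArtinianMonomialSet S) (s : ℕ) :
    ∀ k, f S 0 (s + k) ≤ f S 0 s - k := by
  intro k
  induction k with
  | zero => simp
  | succ n ih =>
    have h1 := f_zero_step hIdeal hSS hArt (s + n)
    have e : s + n + 1 = s + (n + 1) := by omega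
    rw [e] at h1
    omega

lemma minGen_le_aux : ∀ d (m : Fin 3 → ℕ), mdeg m ≤ d → m ∈ S →
    ∃ g, IsMinGen S g ∧ ∀ l, g l ≤ m l := by
  intro d
  induction d with
  | zero =>
    intro m hd hmS
    refine ⟨m, ⟨hmS, ?_⟩, fun l => le_refl _⟩
    intro m' hm' hle
    funext l
    have h1 : ∑ l, m l = 0 := by simpa [mdeg] using hd
    have h2 : m l = 0 := by
      by_contra h
      have := Finset.sum_eq_zero_iff.mp h1 l (Finset.mem_univ l)
      exact h this
    have h3 := hle l
    omega
  | succ n ih =>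
    intro m hd hmS
    by_cases h : IsMinGen S m
    · exact ⟨m, h, fun l => le_refl _⟩
    · have h2 : ¬ ∀ m' ∈ S, (∀ l, m' l ≤ m l) → m' = m := fun hh => h ⟨hmS, hh⟩
      push_neg at h2
      obtain ⟨m', hm'S, hle, hne⟩ := h2
      have hlt : mdeg m' < mdeg m := by
        obtain ⟨l₀, hl₀⟩ := Function.ne_iff.mp hne
        unfold mdeg
        apply Finset.sum_lt_sum
        · intro i _; exact hle i
        · exact ⟨l₀, Finset.mem_univ _, lt_of_le_of_ne (hle l₀) hl₀⟩
      obtain ⟨g, hg, hgle⟩ := ih m' (by omega) hm'S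
      exact ⟨g, hg, fun l => le_trans (hgle l) (hle l)⟩

lemma minGen_last (hArt : IsArtinianMonomialSet S) {N : Fin 3 → ℕ}
    (hN : IsMinGen S N) : N 2 = f S (N 0) (N 1) := by
  have hfle : f S (N 0) (N 1) ≤ N 2 := by
    apply Nat.sInf_le
    show ![N 0, N 1, N 2] ∈ S
    rw [vec_eta]; exact hN.1
  have h2 := hN.2 ![N 0, N 1, f S (N 0) (N 1)] (f_spec hArt _ _)
    (by intro l; fin_cases l <;> simp [hfle])
  have := congrFun h2 2
  simp at this
  omega

end ARL3

/-- Proposition: three variables.  A strongly stable Artinian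
monomial ideal `J` in `k[x_1,x_2,x_3]` is almost reverse lexicographic iff
`f_3(0,|α|+1) + 1 ≤ f_3(α)` for every `α ∈ J_2`.  (This is the monomial-ideal
content of: `S/I` has the strong Lefschetz property iff `gin(I)` is almost
reverse lexicographic, for homogeneous Artinian `I ⊆ k[x_1,x_2,x_3]`.) -/
theorem three_variable_almostRevLex_iff
    (S : Set (Fin 3 → ℕ))
    (hIdeal : IsMonomialIdeal S) (hArt : IsArtinianMonomialSet S)
    (hSS : IsStronglyStable S) :
    AlmostRevLex S ↔
      ∀ α ∈ JSet S 2, fF S 2 (lastVec 2 (asum 2 α + 1)) + 1 ≤ fF S 2 α := by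
  have mv2 : ∀ (α : ℕ → ℕ) t, monVec 3 2 α t = ![α 0, α 1, t] := by
    intro α t; funext l; fin_cases l <;> simp [monVec]
  have mv1 : ∀ (α : ℕ → ℕ) t, monVec 3 1 α t = ![α 0, t, 0] := by
    intro α t; funext l; fin_cases l <;> simp [monVec]
  have mv0 : ∀ (α : ℕ → ℕ) t, monVec 3 0 α t = ![t, 0, 0] := by
    intro α t; funext l; fin_cases l <;> simp [monVec]
  have fF2 : ∀ α : ℕ → ℕ, fF S 2 α = ARL3.f S (α 0) (α 1) := by
    intro α
    unfold fF ARL3.f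
    congr 1
    ext t
    simp [mv2]
  constructor
  · -- AlmostRevLex → star condition
    intro hARL α hα
    obtain ⟨hz, hlt⟩ := hα
    have h1 : α 1 < fF S 1 α := hlt 1 (by norm_num)
    have hab0 : ![α 0, α 1, 0] ∉ S := by
      intro h
      have h2 : fF S 1 α ≤ α 1 := Nat.sInf_le (by rw [Set.mem_setOf_eq, mv1]; exact h)
      omega
    have hcmem : ![α 0, α 1, ARL3.f S (α 0) (α 1)] ∈ S := ARL3.f_spec hArt (α 0) (α 1)
    have hc1 : 1 ≤ ARL3.f S (α 0) (α 1) := by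
      rcases Nat.eq_zero_or_pos (ARL3.f S (α 0) (α 1)) with h | h
      · rw [h] at hcmem; exact absurd hcmem hab0
      · exact h
    obtain ⟨g, hg, hgle⟩ := ARL3.minGen_le_aux (S := S)
      (mdeg ![α 0, α 1, ARL3.f S (α 0) (α 1)]) ![α 0, α 1, ARL3.f S (α 0) (α 1)]
      (le_refl _) hcmem
    have hg0 : g 0 ≤ α 0 := by simpa using hgle 0
    have hg1 : g 1 ≤ α 1 := by simpa using hgle 1
    have hg2 : g 2 ≤ ARL3.f S (α 0) (α 1) := by simpa using hgle 2
    have hglast : g 2 = ARL3.f S (g 0) (g 1) := ARL3.minGen_last hArt hg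
    have hmono : ARL3.f S (α 0) (α 1) ≤ ARL3.f S (g 0) (g 1) :=
      ARL3.f_mono hIdeal hArt hg0 hg1
    have hg2' : g 2 = ARL3.f S (α 0) (α 1) := by omega
    -- apply almost rev lex with M = ![0, g0+g1+1, c-1]
    have hM : ![0, g 0 + g 1 + 1, ARL3.f S (α 0) (α 1) - 1] ∈ S := by
      apply hARL _ g hg
      · simp [mdeg, Fin.sum_univ_three]
        omega
      · refine ⟨2, ?_, ?_⟩
        · simp
          omega
        · intro l hl
          exfalso
          rw [Fin.lt_def] at hl
          have := l.isLt
          simp at hl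
          omega
    have h3 : ARL3.f S 0 (g 0 + g 1 + 1) ≤ ARL3.f S (α 0) (α 1) - 1 := Nat.sInf_le hM
    have h4 : ARL3.f S 0 (α 0 + α 1 + 1) ≤ ARL3.f S 0 (g 0 + g 1 + 1) :=
      ARL3.f_mono hIdeal hArt (le_refl 0) (by omega)
    rw [fF2, fF2]
    have e1 : lastVec 2 (asum 2 α + 1) 0 = 0 := by simp [lastVec]
    have e2 : lastVec 2 (asum 2 α + 1) 1 = α 0 + α 1 + 1 := by
      simp [lastVec, asum, Finset.sum_range_succ]
    rw [e1, e2]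
    omega
  · -- star condition → AlmostRevLex
    intro hstar M N hN hdeg hlt
    obtain ⟨j, hj, hj2⟩ := hlt
    have hNmem : ![N 0, N 1, N 2] ∈ S := by rw [ARL3.vec_eta]; exact hN.1
    have hdeg' : M 0 + M 1 + M 2 = N 0 + N 1 + N 2 := by
      have h1 : mdeg M = M 0 + M 1 + M 2 := by simp [mdeg, Fin.sum_univ_three]
      have h2 : mdeg N = N 0 + N 1 + N 2 := by simp [mdeg, Fin.sum_univ_three]
      omega
    have hMeta : M = ![M 0, M 1, M 2] := (ARL3.vec_eta M).symm
    fin_cases j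
    · -- j = 0 : impossible
      exfalso
      have e1 := hj2 1 (by decide)
      have e2 := hj2 2 (by decide)
      simp at hj e1 e2
      omega
    · -- j = 1 : same last exponent
      have e2 := hj2 2 (by decide)
      simp at hj e2
      rw [hMeta]
      apply (ARL3.mem_f hIdeal hArt).mpr
      have hfN : ARL3.f S (N 0) (N 1) ≤ N 2 := Nat.sInf_le hNmem
      have key : ARL3.f S (N 0 + (N 1 - M 1)) (N 1 - (N 1 - M 1)) ≤ ARL3.f S (N 0) (N 1) :=
        ARL3.f_antidiag hSS hArt (N 0) (N 1) (N 1 - M 1) (by omega)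
      have eM0 : M 0 = N 0 + (N 1 - M 1) := by omega
      have eM1 : M 1 = N 1 - (N 1 - M 1) := by omega
      rw [← eM0, ← eM1] at key
      omega
    · -- j = 2 : smaller last exponent
      simp at hj
      have hc : N 2 = ARL3.f S (N 0) (N 1) := ARL3.minGen_last hArt hN
      -- build α ∈ JSet S 2
      set α : ℕ → ℕ := fun l => if l = 0 then N 0 else if l = 1 then N 1 else 0 with hα
      have hab0 : ![N 0, N 1, 0] ∉ S := by
        intro h
        have : ARL3.f S (N 0) (N 1) ≤ 0 := Nat.sInf_le h
        omega
      have hα0 : α 0 = N 0 := by simp [hα]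
      have hα1 : α 1 = N 1 := by simp [hα]
      have hαJ : α ∈ JSet S 2 := by
        constructor
        · intro l hl
          simp only [hα]
          split_ifs <;> omega
        · intro j hj3
          interval_cases j
          · -- α 0 < fF S 0 α
            show α 0 < fF S 0 α
            rw [hα0]
            by_contra hcon
            push_neg at hcon
            have hne : {t | monVec 3 0 α t ∈ S}.Nonempty := by
              apply ARL3.nonempty_aux hArt
              intro s t h
              rw [mv0, mv0] at h
              simpa using congrFun h 0
            have hmem : monVec 3 0 α (fF S 0 α) ∈ S := Nat.sInf_mem hne
            rw [mv0] at hmem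
            have h2 := hIdeal _ hmem ![N 0 - fF S 0 α, N 1, 0]
            have h3 : ![fF S 0 α, 0, 0] + ![N 0 - fF S 0 α, N 1, 0] = ![N 0, N 1, 0] := by
              funext l
              fin_cases l <;> simp <;> omega
            rw [h3] at h2
            exact hab0 h2
          · -- α 1 < fF S 1 α
            show α 1 < fF S 1 α
            rw [hα1]
            by_contra hcon
            push_neg at hcon
            have hne : {t | monVec 3 1 α t ∈ S}.Nonempty := by
              apply ARL3.nonempty_aux hArt
              intro s t h
              rw [mv1, mv1] at h
              simpa using congrFun h 1
            have hmem : monVec 3 1 α (fF S 1 α) ∈ S := Nat.sInf_mem hne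
            rw [mv1, hα0] at hmem
            have h2 := hIdeal _ hmem ![0, N 1 - fF S 1 α, 0]
            have h3 : ![N 0, fF S 1 α, 0] + ![0, N 1 - fF S 1 α, 0] = ![N 0, N 1, 0] := by
              funext l
              fin_cases l <;> simp <;> omega
            rw [h3] at h2
            exact hab0 h2
      have hstar' := hstar α hαJ
      rw [fF2, fF2] at hstar'
      have e1 : lastVec 2 (asum 2 α + 1) 0 = 0 := by simp [lastVec]
      have e2 : lastVec 2 (asum 2 α + 1) 1 = N 0 + N 1 + 1 := by
        simp [lastVec, asum, Finset.sum_range_succ, hα]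
      have eα0 : α 0 = N 0 := by simp [hα]
      have eα1 : α 1 = N 1 := by simp [hα]
      rw [e1, e2, eα0, eα1] at hstar'
      -- hstar' : f S 0 (N0+N1+1) + 1 ≤ f S (N0) (N1)
      have hiter := ARL3.f_zero_iter hIdeal hSS hArt (N 0 + N 1 + 1) (N 2 - M 2 - 1)
      have hdiag := ARL3.f_le_zero_diag hSS hArt (M 0) (M 1)
      have e3 : N 0 + N 1 + 1 + (N 2 - M 2 - 1) = M 0 + M 1 := by omega
      rw [e3] at hiter
      rw [hMeta]
      apply (ARL3.mem_f hIdeal hArt).mpr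
      omega
end

section
/- Let n ≥ 3 and let J be a strongly stable Artinian monomial ideal in R = k[x_1,…,x_n]. Then J is almost reverse lexicographic if and only if the following two conditions hold: (1) for each 2 ≤ i ≤ n−1 and every α = (α_1,…,α_i) ∈ J_i, f_{i+1}(0,…,0,|α|+1) + 1 ≤ f_{i+1}(α); and (2) for each 3 ≤ i ≤ n−1 and all α, β ∈ J_i with |α| = |β| and α < β in the reverse lexicographic order, f_{i+1}(β) ≤ f_{i+1}(α). (In particular the conditions of the general equivalence for i = 1, and condition (2) for i = 2, are automatically satisfied; this is the monomial-ideal content of the paper's Main Theorem.) -/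
namespace ARL

variable {n : ℕ} {S : Set (Fin n → ℕ)}

/-- pad a `Fin n → ℕ` vector to `ℕ → ℕ`. -/
def lift {n : ℕ} (m : Fin n → ℕ) : ℕ → ℕ := fun p => if h : p < n then m ⟨p, h⟩ else 0

/-- subtract one at position `r`. -/
def subOne (α : ℕ → ℕ) (r : ℕ) : ℕ → ℕ := fun l => if l = r then α l - 1 else α l

lemma mem_of_ptwise_le (hIdeal : IsMonomialIdeal S) {u v : Fin n → ℕ}
    (hu : u ∈ S) (h : ∀ l, u l ≤ v l) : v ∈ S := by
  have : v = u + (v - u) := by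
    funext l
    simp only [Pi.add_apply, Pi.sub_apply]
    have := h l
    omega
  rw [this]
  exact hIdeal u hu _

lemma monVec_congr {i : ℕ} {α β : ℕ → ℕ} (h : ∀ l < i, α l = β l) (t : ℕ) :
    monVec n i α t = monVec n i β t := by
  funext p
  simp only [monVec]
  split
  · exact h _ ‹_›
  · rfl

lemma fF_congr {i : ℕ} {α β : ℕ → ℕ} (h : ∀ l < i, α l = β l) :
    fF S i α = fF S i β := by
  unfold fF
  congr 1
  ext t
  simp only [Set.mem_setOf_eq, monVec_congr h t]

lemma setT_nonempty (hArt : IsArtinianMonomialSet S) {i : ℕ} (hi : i < n) (α : ℕ → ℕ) :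
    {t | monVec n i α t ∈ S}.Nonempty := by
  by_contra h
  rw [Set.not_nonempty_iff_eq_empty] at h
  have hsub : Set.range (monVec n i α) ⊆ Sᶜ := by
    rintro _ ⟨t, rfl⟩
    intro hmem
    have : t ∈ {t | monVec n i α t ∈ S} := hmem
    simp [h] at this
  have hinj : Function.Injective (monVec n i α) := by
    intro a b hab
    have := congrFun hab ⟨i, hi⟩
    simpa [monVec] using this
  exact Set.infinite_range_of_injective hinj (hArt.subset hsub)

lemma fF_spec (hArt : IsArtinianMonomialSet S) {i : ℕ} (hi : i < n) (α : ℕ → ℕ) :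
    monVec n i α (fF S i α) ∈ S :=
  Nat.sInf_mem (setT_nonempty hArt hi α)

lemma fF_le {i : ℕ} {α : ℕ → ℕ} {t : ℕ} (h : monVec n i α t ∈ S) : fF S i α ≤ t :=
  Nat.sInf_le h

lemma monVec_mem_of_fF_le (hArt : IsArtinianMonomialSet S) (hIdeal : IsMonomialIdeal S)
    {i : ℕ} (hi : i < n) {α : ℕ → ℕ} {t : ℕ} (h : fF S i α ≤ t) :
    monVec n i α t ∈ S := by
  refine mem_of_ptwise_le hIdeal (fF_spec hArt hi α) ?_
  intro l
  simp only [monVec]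
  split
  · exact le_refl _
  · split
    · exact h
    · exact le_refl _

lemma fF_mono (hArt : IsArtinianMonomialSet S) (hIdeal : IsMonomialIdeal S)
    {i : ℕ} (hi : i < n) {α β : ℕ → ℕ} (h : ∀ l < i, α l ≤ β l) :
    fF S i β ≤ fF S i α := by
  refine fF_le (mem_of_ptwise_le hIdeal (fF_spec hArt hi α) ?_)
  intro l
  simp only [monVec]
  split
  · exact h _ ‹_›
  · exact le_refl _

/-- last-support decomposition of a member of `S`. -/
lemma exists_last_supp (hn : 0 < n) {m : Fin n → ℕ} (hm : m ∈ S) :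
    ∃ l : Fin n, fF S l.val (lift m) ≤ m l ∧ (∀ p, l < p → m p = 0) ∧
      (0 < m l ∨ l.val = 0) := by
  by_cases hT : (Finset.univ.filter (fun p : Fin n => 0 < m p)).Nonempty
  · set l := (Finset.univ.filter (fun p : Fin n => 0 < m p)).max' hT with hl
    have hlmem : l ∈ Finset.univ.filter (fun p : Fin n => 0 < m p) :=
      Finset.max'_mem _ hT
    have hlpos : 0 < m l := by simpa using hlmem
    have habove : ∀ p, l < p → m p = 0 := by
      intro p hp
      by_contra hne
      have : p ∈ Finset.univ.filter (fun p : Fin n => 0 < m p) := by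
        simp [Nat.pos_of_ne_zero hne]
      exact absurd (Finset.le_max' _ _ this) (not_le_of_gt hp)
    have hmeq : m = monVec n l.val (lift m) (m l) := by
      funext p
      simp only [monVec, lift]
      rcases lt_trichotomy p.val l.val with h | h | h
      · rw [if_pos h, dif_pos p.isLt]
      · rw [if_neg (by omega), if_pos h]
        congr 1
        exact Fin.ext h
      · rw [if_neg (by omega), if_neg (by omega)]
        exact habove p (by exact h)
    refine ⟨l, ?_, habove, Or.inl hlpos⟩
    exact fF_le (by rw [← hmeq]; exact hm)
  · have hm0 : ∀ p, m p = 0 := by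
      intro p
      by_contra hne
      exact hT ⟨p, by simp [Nat.pos_of_ne_zero hne]⟩
    refine ⟨⟨0, hn⟩, ?_, fun p _ => hm0 p, Or.inr rfl⟩
    have : monVec n 0 (lift m) 0 = m := by
      funext p
      simp only [monVec]
      rw [if_neg (by omega)]
      split
      · exact (hm0 p).symm
      · exact (hm0 p).symm
    rw [hm0 ⟨0, hn⟩]
    exact fF_le (by rw [this]; exact hm)

/-- if `m ∉ S` then every coordinate is below the `f`-bound. -/
lemma lt_fF_of_notMem (hArt : IsArtinianMonomialSet S) (hIdeal : IsMonomialIdeal S)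
    {m : Fin n → ℕ} (hm : m ∉ S) (l : Fin n) : m l < fF S l.val (lift m) := by
  by_contra h
  push_neg at h
  refine hm (mem_of_ptwise_le hIdeal (fF_spec hArt l.isLt (lift m)) ?_)
  intro p
  simp only [monVec, lift]
  split
  · rw [dif_pos p.isLt]
  · split
    · have : p = l := Fin.ext ‹_›
      rw [this]; exact h
    · exact Nat.zero_le _


lemma asum_subOne {α : ℕ → ℕ} {i r : ℕ} (hr : r < i) (hpos : 0 < α r) :
    asum i (subOne α r) + 1 = asum i α := by
  unfold asum
  have hmem : r ∈ Finset.range i := Finset.mem_range.2 hr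
  rw [← Finset.sum_erase_add _ (subOne α r) hmem, ← Finset.sum_erase_add _ α hmem]
  have h1 : ∑ p ∈ (Finset.range i).erase r, subOne α r p
      = ∑ p ∈ (Finset.range i).erase r, α p := by
    refine Finset.sum_congr rfl fun p hp => ?_
    have : p ≠ r := Finset.ne_of_mem_erase hp
    simp [subOne, this]
  rw [h1]
  have : subOne α r r = α r - 1 := by simp [subOne]
  rw [this]
  omega

lemma subOne_le {α : ℕ → ℕ} {r : ℕ} (l : ℕ) : subOne α r l ≤ α l := by
  simp only [subOne]
  split <;> omega

lemma J_down (hArt : IsArtinianMonomialSet S) (hIdeal : IsMonomialIdeal S)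
    {i : ℕ} (hin : i ≤ n) {α β : ℕ → ℕ} (hα : α ∈ JSet S i)
    (hle : ∀ l, β l ≤ α l) (hsupp : ∀ l, i ≤ l → β l = 0) : β ∈ JSet S i := by
  refine ⟨hsupp, fun j hj => ?_⟩
  calc β j ≤ α j := hle j
    _ < fF S j α := hα.2 j hj
    _ ≤ fF S j β := fF_mono hArt hIdeal (lt_of_lt_of_le hj hin) (fun l _ => hle l)

lemma J_notMem (hn0 : 0 < n) {i : ℕ} (hi : 1 ≤ i) {α : ℕ → ℕ}
    (hα : α ∈ JSet S i) : monVec n i α 0 ∉ S := by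
  intro hmem
  obtain ⟨l, h1, _h2, h3⟩ := exists_last_supp hn0 hmem
  have hlv : l.val < i := by
    rcases h3 with h3 | h3
    · by_contra hge
      push_neg at hge
      have : monVec n i α 0 l = 0 := by
        simp only [monVec]
        rw [if_neg (by omega)]
        split <;> rfl
      omega
    · omega
  have hval : monVec n i α 0 l = α l.val := by
    simp only [monVec]
    rw [if_pos hlv]
  have hcongr : fF S l.val (lift (monVec n i α 0)) = fF S l.val α := by
    refine fF_congr fun p hp => ?_
    have hpn : p < n := lt_trans hp l.isLt
    have h0 : lift (monVec n i α 0) p = monVec n i α 0 ⟨p, hpn⟩ := by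
      simp [lift, hpn]
    rw [h0]
    simp only [monVec]
    rw [if_pos (show ((⟨p, hpn⟩ : Fin n) : ℕ) < i from lt_trans hp hlv)]
  rw [hval, hcongr] at h1
  exact absurd (hα.2 l.val hlv) (by omega)

lemma fF_pos_of_J (hArt : IsArtinianMonomialSet S) (hIdeal : IsMonomialIdeal S)
    {i : ℕ} (hi : 1 ≤ i) (hin : i < n) {α : ℕ → ℕ} (hα : α ∈ JSet S i) :
    0 < fF S i α := by
  by_contra h
  push_neg at h
  exact J_notMem (by omega) hi hα
    (monVec_mem_of_fF_le hArt hIdeal hin (by omega))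

lemma asum_lastVec {i e : ℕ} (hi : 1 ≤ i) : asum i (lastVec i e) = e := by
  unfold asum lastVec
  rw [Finset.sum_ite_eq' (Finset.range i) (i-1) (fun _ => e)]
  rw [if_pos (Finset.mem_range.2 (by omega))]

lemma mdeg_monVec {i : ℕ} (hin : i < n) (α : ℕ → ℕ) (t : ℕ) :
    mdeg (monVec n i α t) = asum i α + t := by
  unfold mdeg monVec
  rw [Fin.sum_univ_eq_sum_range (fun p => if p < i then α p else if p = i then t else 0) n]
  rw [Finset.range_eq_Ico, ← Finset.sum_Ico_consecutive _ (Nat.zero_le i) (le_of_lt hin)]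
  congr 1
  · rw [← Finset.range_eq_Ico]
    refine Finset.sum_congr rfl fun p hp => ?_
    rw [if_pos (Finset.mem_range.1 hp)]
  · rw [Finset.sum_eq_single_of_mem i (Finset.mem_Ico.2 ⟨le_refl i, hin⟩)]
    · rw [if_neg (by omega), if_pos rfl]
    · intro p hp hne
      have := Finset.mem_Ico.1 hp
      rw [if_neg (by omega), if_neg (by omega)]

lemma move_mem (hSS : IsStronglyStable S) {m : Fin n → ℕ} (hm : m ∈ S) {q p : Fin n}
    (hqp : q < p) (hpos : 0 < m p) {v : Fin n → ℕ}
    (hv : ∀ x, v x = if x = q then m q + 1 else if x = p then m p - 1 else m x) :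
    v ∈ S := by
  have h2 : v = fun x => if x = q then m q + 1 else if x = p then m p - 1 else m x :=
    funext hv
  rw [h2]
  exact hSS m hm q p hqp hpos

lemma monVec_apply_lt {i : ℕ} (α : ℕ → ℕ) (t : ℕ) {x : Fin n} (h : (x : ℕ) < i) :
    monVec n i α t x = α x := by
  simp only [monVec]
  rw [if_pos h]

lemma monVec_apply_eq {i : ℕ} (α : ℕ → ℕ) (t : ℕ) {x : Fin n} (h : (x : ℕ) = i) :
    monVec n i α t x = t := by
  simp only [monVec]
  rw [if_neg (by omega), if_pos h]

lemma monVec_apply_gt {i : ℕ} (α : ℕ → ℕ) (t : ℕ) {x : Fin n} (h : i < (x : ℕ)) :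
    monVec n i α t x = 0 := by
  simp only [monVec]
  rw [if_neg (by omega), if_neg (by omega)]

/-- spreading: if the concentrated monomial `x_{i-1}^{|γ|} x_i^c` is in `S`, then so is
`x^γ x_i^c` for any `γ` supported in `[0,i)`. -/
lemma spread (hIdeal : IsMonomialIdeal S) (hSS : IsStronglyStable S)
    {i : ℕ} (hi : 1 ≤ i) (hin : i < n) {c : ℕ} :
    ∀ w (γ : ℕ → ℕ), (∑ l ∈ Finset.range (i-1), γ l) = w → (∀ l, i ≤ l → γ l = 0) →
      monVec n i (lastVec i (asum i γ)) c ∈ S → monVec n i γ c ∈ S := by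
  intro w
  induction w using Nat.strong_induction_on with
  | _ w IH =>
  intro γ hw hsupp hmem
  rcases Nat.eq_zero_or_pos w with h0 | h0
  · subst h0
    have hz : ∀ l ∈ Finset.range (i-1), γ l = 0 := by
      intro l hl
      exact (Finset.sum_eq_zero_iff.1 hw) l hl
    have hγi : asum i γ = γ (i-1) := by
      unfold asum
      have : Finset.range i = Finset.range ((i-1)+1) := by
        congr 1; omega
      rw [this, Finset.sum_range_succ]
      have : ∑ j ∈ Finset.range (i-1), γ j = 0 := hw
      omega
    have heq : monVec n i γ c = monVec n i (lastVec i (asum i γ)) c := by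
      refine monVec_congr (fun l hl => ?_) c
      unfold lastVec
      by_cases hl1 : l = i - 1
      · subst hl1; rw [if_pos rfl, hγi]
      · rw [if_neg hl1]
        exact hz l (Finset.mem_range.2 (by omega))
    rw [heq]
    exact hmem
  · have hex : ∃ l, l < i - 1 ∧ 0 < γ l := by
      by_contra hno
      push_neg at hno
      have : ∑ l ∈ Finset.range (i-1), γ l = 0 := by
        refine Finset.sum_eq_zero fun l hl => ?_
        have := hno l (Finset.mem_range.1 hl)
        omega
      omega
    obtain ⟨l, hl, hγl⟩ := hex
    set γ₂ : ℕ → ℕ := fun p => if p = l then γ p - 1 else if p = i-1 then γ p + 1 else γ p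
      with hγ₂
    have hlr : l ∈ Finset.range (i-1) := Finset.mem_range.2 hl
    have hsum2 : asum i γ₂ = asum i γ := by
      unfold asum
      have hlmem : l ∈ Finset.range i := Finset.mem_range.2 (by omega)
      have himem : i - 1 ∈ (Finset.range i).erase l :=
        Finset.mem_erase.2 ⟨by omega, Finset.mem_range.2 (by omega)⟩
      rw [← Finset.sum_erase_add _ γ₂ hlmem, ← Finset.sum_erase_add _ γ hlmem,
        ← Finset.sum_erase_add _ γ₂ himem, ← Finset.sum_erase_add _ γ himem]
      have hcong : ∑ p ∈ ((Finset.range i).erase l).erase (i-1), γ₂ p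
          = ∑ p ∈ ((Finset.range i).erase l).erase (i-1), γ p := by
        refine Finset.sum_congr rfl fun p hp => ?_
        have h1 : p ≠ i - 1 := Finset.ne_of_mem_erase hp
        have h2 : p ≠ l := Finset.ne_of_mem_erase (Finset.mem_of_mem_erase hp)
        simp only [hγ₂]
        rw [if_neg h2, if_neg h1]
      rw [hcong]
      have e1 : γ₂ (i-1) = γ (i-1) + 1 := by
        simp only [hγ₂]
        rw [if_neg (show ¬(i-1 = l) by omega), if_true]
      have e2 : γ₂ l = γ l - 1 := by
        simp only [hγ₂]
        rw [if_true]
      rw [e1, e2]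
      omega
    have hw2 : ∑ p ∈ Finset.range (i-1), γ₂ p = w - 1 := by
      rw [← Finset.sum_erase_add _ γ₂ hlr, ← hw, ← Finset.sum_erase_add _ γ hlr]
      have hcong : ∑ p ∈ (Finset.range (i-1)).erase l, γ₂ p
          = ∑ p ∈ (Finset.range (i-1)).erase l, γ p := by
        refine Finset.sum_congr rfl fun p hp => ?_
        have h2 : p ≠ l := Finset.ne_of_mem_erase hp
        have h1 : p ≠ i - 1 := by
          have := (Finset.mem_range.1 (Finset.mem_of_mem_erase hp)); omega
        simp only [hγ₂]
        rw [if_neg h2, if_neg h1]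
      rw [hcong]
      have e2 : γ₂ l = γ l - 1 := by
        simp only [hγ₂]
        rw [if_true]
      rw [e2]
      omega
    have hsupp2 : ∀ p, i ≤ p → γ₂ p = 0 := by
      intro p hp
      have h1 : p ≠ l := by omega
      have h2 : p ≠ i - 1 := by omega
      simp only [hγ₂]
      rw [if_neg h1, if_neg h2]
      exact hsupp p hp
    have hmem2 : monVec n i γ₂ c ∈ S := by
      refine IH (w-1) (by omega) γ₂ hw2 hsupp2 ?_
      rw [hsum2]
      exact hmem
    -- now move one unit from position i-1 back to position l
    set q : Fin n := ⟨l, by omega⟩ with hq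
    set p : Fin n := ⟨i-1, by omega⟩ with hp
    have hql : (q : ℕ) = l := rfl
    have hpl : (p : ℕ) = i - 1 := rfl
    have hqlt : q < p := by
      rw [Fin.lt_def, hql, hpl]; omega
    have hppos : 0 < monVec n i γ₂ c p := by
      rw [monVec_apply_lt γ₂ c (by rw [hpl]; omega), hpl]
      simp only [hγ₂]
      rw [if_neg (show ¬(i-1 = l) by omega), if_true]
      omega
    refine move_mem hSS hmem2 hqlt hppos fun x => ?_
    by_cases hxq : x = q
    · rw [if_pos hxq, hxq,
        monVec_apply_lt γ c (by rw [hql]; omega),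
        monVec_apply_lt γ₂ c (by rw [hql]; omega), hql]
      simp only [hγ₂]
      rw [if_true]
      omega
    · rw [if_neg hxq]
      by_cases hxp : x = p
      · rw [if_pos hxp, hxp,
          monVec_apply_lt γ c (by rw [hpl]; omega),
          monVec_apply_lt γ₂ c (by rw [hpl]; omega), hpl]
        simp only [hγ₂]
        rw [if_neg (show ¬(i-1 = l) by omega), if_true]
        omega
      · rw [if_neg hxp]
        have hvl : (x : ℕ) ≠ l := fun h => hxq (Fin.ext (h.trans hql.symm))
        have hvp : (x : ℕ) ≠ i-1 := fun h => hxp (Fin.ext (h.trans hpl.symm))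
        rcases lt_trichotomy ((x : Fin n) : ℕ) i with h | h | h
        · rw [monVec_apply_lt γ c h, monVec_apply_lt γ₂ c h]
          simp only [hγ₂]
          rw [if_neg hvl, if_neg hvp]
        · rw [monVec_apply_eq γ c h, monVec_apply_eq γ₂ c h]
        · rw [monVec_apply_gt γ c h, monVec_apply_gt γ₂ c h]

lemma shift01 (hSS : IsStronglyStable S) (h2n : 2 < n) :
    ∀ k (α : ℕ → ℕ) (c : ℕ), monVec n 2 α c ∈ S → k ≤ α 1 →
      monVec n 2 (fun l => if l = 0 then α 0 + k else if l = 1 then α 1 - k else α l) c ∈ S := by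
  intro k
  induction k with
  | zero =>
    intro α c hm _
    have heq : monVec n 2 (fun l => if l = 0 then α 0 + 0 else if l = 1 then α 1 - 0 else α l) c
        = monVec n 2 α c := by
      refine monVec_congr (fun l hl => ?_) c
      interval_cases l <;> simp
    rw [heq]
    exact hm
  | succ k IH =>
    intro α c hm hk
    set α' : ℕ → ℕ := fun l => if l = 0 then α 0 + 1 else if l = 1 then α 1 - 1 else α l
      with hα'
    set q : Fin n := ⟨0, by omega⟩ with hqd
    set p : Fin n := ⟨1, by omega⟩ with hpd
    have hql : (q : ℕ) = 0 := rfl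
    have hpl : (p : ℕ) = 1 := rfl
    have hqlt : q < p := by rw [Fin.lt_def, hql, hpl]; omega
    have hppos : 0 < monVec n 2 α c p := by
      rw [monVec_apply_lt α c (by omega : (p : ℕ) < 2), hpl]
      omega
    have h1 : monVec n 2 α' c ∈ S := by
      refine move_mem hSS hm hqlt hppos fun x => ?_
      by_cases hxq : x = q
      · rw [if_pos hxq, hxq, monVec_apply_lt α' c (by rw [hql]; omega),
          monVec_apply_lt α c (by rw [hql]; omega), hql]
        simp [hα']
      · rw [if_neg hxq]
        by_cases hxp : x = p
        · rw [if_pos hxp, hxp, monVec_apply_lt α' c (by rw [hpl]; omega),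
            monVec_apply_lt α c (by rw [hpl]; omega), hpl]
          simp [hα']
        · rw [if_neg hxp]
          have hv0 : (x : ℕ) ≠ 0 := fun h => hxq (Fin.ext (h.trans hql.symm))
          have hv1 : (x : ℕ) ≠ 1 := fun h => hxp (Fin.ext (h.trans hpl.symm))
          rcases lt_trichotomy ((x : Fin n) : ℕ) 2 with h | h | h
          · omega
          · rw [monVec_apply_eq α' c h, monVec_apply_eq α c h]
          · rw [monVec_apply_gt α' c h, monVec_apply_gt α c h]
    have h2 := IH α' c h1 (by simp [hα']; omega)
    have heq : monVec n 2 (fun l => if l = 0 then α' 0 + k else if l = 1 then α' 1 - k else α' l) c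
        = monVec n 2 (fun l => if l = 0 then α 0 + (k+1) else if l = 1 then α 1 - (k+1) else α l) c := by
      refine monVec_congr (fun l hl => ?_) c
      interval_cases l <;> simp [hα'] <;> omega
    rw [heq] at h2
    exact h2

lemma minGen_of (hArt : IsArtinianMonomialSet S) (hIdeal : IsMonomialIdeal S)
    {i : ℕ} (hi : 1 ≤ i) (hin : i < n) {α : ℕ → ℕ} (hα : α ∈ JSet S i)
    (hmin : ∀ r, r < i → 0 < α r → fF S i α < fF S i (subOne α r)) :
    IsMinGen S (monVec n i α (fF S i α)) := by
  set s := fF S i α with hs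
  have hspos : 0 < s := fF_pos_of_J hArt hIdeal hi hin hα
  refine ⟨fF_spec hArt hin α, ?_⟩
  intro m' hm' hle
  by_contra hne
  have hex : ∃ r : Fin n, m' r < monVec n i α s r := by
    by_contra hno
    push_neg at hno
    exact hne (funext fun x => le_antisymm (hle x) (hno x))
  obtain ⟨r, hr⟩ := hex
  set N := monVec n i α s with hN
  set N' : Fin n → ℕ := fun x => if x = r then N x - 1 else N x with hN'
  have hN'le : ∀ x, N' x ≤ N x := by
    intro x
    simp only [hN']
    split <;> omega
  have hN'mem : N' ∈ S := by
    refine mem_of_ptwise_le hIdeal hm' fun x => ?_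
    simp only [hN']
    by_cases hxr : x = r
    · rw [if_pos hxr, hxr]
      have := hle r
      omega
    · rw [if_neg hxr]
      exact hle x
  have hrv : (r : ℕ) ≤ i := by
    by_contra h
    push_neg at h
    have : N r = 0 := monVec_apply_gt α s h
    omega
  obtain ⟨l, h1, _h2, h3⟩ := exists_last_supp (by omega : 0 < n) hN'mem
  rcases lt_trichotomy ((l : Fin n) : ℕ) i with hli | hli | hli
  · -- l < i : contradicts standardness of α
    have key1 : fF S l.val α ≤ fF S l.val (lift N') := by
      refine fF_mono hArt hIdeal (lt_trans hli hin) fun p hp => ?_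
      have hpn : p < n := by omega
      have : lift N' p = N' ⟨p, hpn⟩ := by simp [lift, hpn]
      rw [this]
      calc N' ⟨p, hpn⟩ ≤ N ⟨p, hpn⟩ := hN'le _
        _ = α p := monVec_apply_lt α s (show ((⟨p, hpn⟩ : Fin n) : ℕ) < i by
            exact lt_trans hp hli)
    have key2 : N' l ≤ α l.val := by
      calc N' l ≤ N l := hN'le _
        _ = α l.val := monVec_apply_lt α s hli
    have := hα.2 l.val hli
    omega
  · -- l = i
    by_cases hri : (r : ℕ) < i
    · have hcongr : fF S i (lift N') = fF S i (subOne α r.val) := by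
        refine fF_congr fun p hp => ?_
        have hpn : p < n := by omega
        have e1 : lift N' p = N' ⟨p, hpn⟩ := by simp [lift, hpn]
        rw [e1]
        simp only [hN', subOne]
        have hNp : N ⟨p, hpn⟩ = α p := by
          rw [hN]
          exact monVec_apply_lt α s (show ((⟨p, hpn⟩ : Fin n) : ℕ) < i from hp)
        by_cases hpr : p = r.val
        · rw [if_pos (Fin.ext hpr : (⟨p, hpn⟩ : Fin n) = r), if_pos hpr, hNp]
        · rw [if_neg (fun h => hpr (congrArg Fin.val h)), if_neg hpr, hNp]
      have hlr : l ≠ r := fun h => by rw [h] at hli; omega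
      have hNl : N' l = s := by
        simp only [hN']
        rw [if_neg hlr]
        exact monVec_apply_eq α s hli
      have hαr : 0 < α r.val := by
        have : N r = α r.val := monVec_apply_lt α s hri
        omega
      have := hmin r.val hri hαr
      rw [hli] at h1
      rw [hcongr, hNl] at h1
      omega
    · have hriv : (r : ℕ) = i := by omega
      have hlreq : l = r := Fin.ext (by omega)
      have hcongr : fF S i (lift N') = fF S i α := by
        refine fF_congr fun p hp => ?_
        have hpn : p < n := by omega
        have e1 : lift N' p = N' ⟨p, hpn⟩ := by simp [lift, hpn]
        rw [e1]
        simp only [hN']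
        rw [if_neg (fun h => by
          have : p = (r : ℕ) := congrArg Fin.val h
          omega)]
        rw [hN]
        exact monVec_apply_lt α s (show ((⟨p, hpn⟩ : Fin n) : ℕ) < i from hp)
      have hNl : N' l = s - 1 := by
        simp only [hN']
        rw [if_pos hlreq]
        have : N l = s := monVec_apply_eq α s hli
        omega
      rw [hli] at h1
      rw [hcongr, hNl] at h1
      omega
  · -- l > i : impossible
    have hlr : l ≠ r := fun h => by rw [h] at hli; omega
    have : N' l = 0 := by
      simp only [hN']
      rw [if_neg hlr]
      exact monVec_apply_gt α s hli
    rcases h3 with h3 | h3 <;> omega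

lemma subOne_J (hArt : IsArtinianMonomialSet S) (hIdeal : IsMonomialIdeal S)
    {i : ℕ} (hin : i < n) {α : ℕ → ℕ} (hα : α ∈ JSet S i) (r : ℕ) :
    subOne α r ∈ JSet S i := by
  refine J_down hArt hIdeal (le_of_lt hin) hα subOne_le fun l hl => ?_
  simp only [subOne]
  rw [hα.1 l hl]
  split <;> rfl

lemma lastVec_mono {i d : ℕ} : ∀ l < i, lastVec i d l ≤ lastVec i (d+1) l := by
  intro l _
  unfold lastVec
  split <;> omega

/-- Condition (1) follows from ARL. -/
lemma cond_one (hArt : IsArtinianMonomialSet S) (hIdeal : IsMonomialIdeal S)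
    (hARL : AlmostRevLex S) {i : ℕ} (hi : 1 ≤ i) (hin : i < n) :
    ∀ d (α : ℕ → ℕ), α ∈ JSet S i → asum i α = d →
      fF S i (lastVec i (d + 1)) + 1 ≤ fF S i α := by
  intro d
  induction d using Nat.strong_induction_on with
  | _ d IH =>
  intro α hα hd
  set s := fF S i α with hs
  have hspos : 0 < s := fF_pos_of_J hArt hIdeal hi hin hα
  by_cases hmin : ∀ r, r < i → 0 < α r → s < fF S i (subOne α r)
  · have hMG := minGen_of hArt hIdeal hi hin hα hmin
    set M := monVec n i (lastVec i (d+1)) (s-1) with hM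
    have hdeg : mdeg M = mdeg (monVec n i α s) := by
      rw [hM, mdeg_monVec hin, mdeg_monVec hin, asum_lastVec hi, hd]
      omega
    have hrl : RevLexLT (monVec n i α s) M := by
      refine ⟨⟨i, hin⟩, ?_, ?_⟩
      · rw [hM, monVec_apply_eq (x := ⟨i, hin⟩) (lastVec i (d+1)) (s-1) rfl,
          monVec_apply_eq (x := ⟨i, hin⟩) α s rfl]
        omega
      · intro l hl
        have hlv : i < (l : ℕ) := hl
        rw [hM, monVec_apply_gt (lastVec i (d+1)) (s-1) hlv, monVec_apply_gt α s hlv]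
    have hmem := hARL M _ hMG hdeg hrl
    rw [hM] at hmem
    have := fF_le hmem
    omega
  · push_neg at hmin
    obtain ⟨r, hr, hαr, hle'⟩ := hmin
    have hα' : subOne α r ∈ JSet S i := subOne_J hArt hIdeal hin hα r
    have hd' : asum i (subOne α r) + 1 = d := by
      rw [← hd]
      exact asum_subOne hr hαr
    have hIH := IH (d-1) (by omega) (subOne α r) hα' (by omega)
    have heq : (d-1)+1 = d := by omega
    rw [heq] at hIH
    have hmono : fF S i (lastVec i (d+1)) ≤ fF S i (lastVec i d) :=
      fF_mono hArt hIdeal hin lastVec_mono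
    omega

/-- Condition (2) follows from ARL. -/
lemma cond_two (hArt : IsArtinianMonomialSet S) (hIdeal : IsMonomialIdeal S)
    (hSS : IsStronglyStable S) (hARL : AlmostRevLex S) {i : ℕ} (hi : 1 ≤ i) (hin : i < n)
    {α β : ℕ → ℕ} (hα : α ∈ JSet S i) (hβ : β ∈ JSet S i)
    (hab : asum i α = asum i β) (hlt : RevLexLT' α β) : fF S i β ≤ fF S i α := by
  obtain ⟨j, hj1, hj2⟩ := hlt
  have hji : j < i := by
    by_contra h
    push_neg at h
    have := hα.1 j h
    omega
  set s := fF S i α with hs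
  have hspos : 0 < s := fF_pos_of_J hArt hIdeal hi hin hα
  by_cases hmin : ∀ r, r < i → 0 < α r → s < fF S i (subOne α r)
  · have hMG := minGen_of hArt hIdeal hi hin hα hmin
    set M := monVec n i β s with hM
    have hdeg : mdeg M = mdeg (monVec n i α s) := by
      rw [hM, mdeg_monVec hin, mdeg_monVec hin, hab]
    have hrl : RevLexLT (monVec n i α s) M := by
      refine ⟨⟨j, lt_trans hji hin⟩, ?_, ?_⟩
      · rw [hM, monVec_apply_lt (x := ⟨j, lt_trans hji hin⟩) β s hji,
          monVec_apply_lt (x := ⟨j, lt_trans hji hin⟩) α s hji]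
        exact hj1
      · intro l hl
        have hlv : j < (l : ℕ) := hl
        rcases lt_trichotomy ((l : Fin n) : ℕ) i with h | h | h
        · rw [hM, monVec_apply_lt β s h, monVec_apply_lt α s h]
          exact hj2 _ hlv
        · rw [hM, monVec_apply_eq β s h, monVec_apply_eq α s h]
        · rw [hM, monVec_apply_gt β s h, monVec_apply_gt α s h]
    have hmem := hARL M _ hMG hdeg hrl
    rw [hM] at hmem
    exact fF_le hmem
  · push_neg at hmin
    obtain ⟨r, hr, hαr, hle'⟩ := hmin
    have hα' : subOne α r ∈ JSet S i := subOne_J hArt hIdeal hin hα r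
    have hd' : asum i (subOne α r) + 1 = asum i α := asum_subOne hr hαr
    have hIH := cond_one hArt hIdeal hARL hi hin (asum i (subOne α r)) (subOne α r) hα' rfl
    have heq : asum i (subOne α r) + 1 = asum i β := by omega
    rw [heq] at hIH
    -- so fF S i (lastVec i (asum i β)) + 1 ≤ fF S i (subOne α r) ≤ s
    have hcon : monVec n i (lastVec i (asum i β)) (s-1) ∈ S := by
      refine monVec_mem_of_fF_le hArt hIdeal hin ?_
      omega
    have hfin : monVec n i β (s-1) ∈ S :=
      spread hIdeal hSS hi hin _ β rfl hβ.1 hcon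
    have := fF_le hfin
    omega

/-- truncation of a monomial to its first `i` coordinates, as an `ℕ → ℕ` tuple. -/
def truncF {n : ℕ} (m : Fin n → ℕ) (i : ℕ) : ℕ → ℕ :=
  fun l => if h : l < n then (if l < i then m ⟨l, h⟩ else 0) else 0

lemma truncF_lt {m : Fin n → ℕ} {i l : ℕ} (h : l < i) (hln : l < n) :
    truncF m i l = m ⟨l, hln⟩ := by
  simp [truncF, hln, h]

lemma truncF_ge {m : Fin n → ℕ} {i l : ℕ} (h : i ≤ l) : truncF m i l = 0 := by
  unfold truncF
  split
  · rw [if_neg (by omega)]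
  · rfl

lemma fF_lift_trunc {m : Fin n → ℕ} {i : ℕ} (l : Fin n) (h : (l : ℕ) ≤ i) :
    fF S l.val (lift m) = fF S l.val (truncF m i) := by
  refine fF_congr fun p hp => ?_
  have hpn : p < n := lt_trans hp l.isLt
  rw [truncF_lt (by omega) hpn]
  simp [lift, hpn]

lemma trunc_J_of_notMem (hArt : IsArtinianMonomialSet S) (hIdeal : IsMonomialIdeal S)
    {m : Fin n → ℕ} (hm : m ∉ S) {i : ℕ} (hin : i ≤ n) : truncF m i ∈ JSet S i := by
  refine ⟨fun l hl => truncF_ge hl, fun l hl => ?_⟩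
  have hln : l < n := by omega
  have hbound := lt_fF_of_notMem hArt hIdeal hm ⟨l, hln⟩
  rw [fF_lift_trunc (i := i) ⟨l, hln⟩ (le_of_lt hl)] at hbound
  rw [truncF_lt hl hln]
  exact hbound

lemma lastVec_J (hArt : IsArtinianMonomialSet S) (hIdeal : IsMonomialIdeal S)
    {i e : ℕ} (hi : 1 ≤ i) (hin : i < n)
    (hnm : monVec n i (lastVec i e) 0 ∉ S) : lastVec i e ∈ JSet S i := by
  refine ⟨fun l hl => by unfold lastVec; rw [if_neg (by omega)], fun l hl => ?_⟩
  by_contra h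
  push_neg at h
  have hln : l < n := by omega
  have hmem : monVec n l (lastVec i e) (lastVec i e l) ∈ S :=
    monVec_mem_of_fF_le hArt hIdeal hln h
  by_cases hl1 : l = i - 1
  · have heq : monVec n l (lastVec i e) (lastVec i e l) = monVec n i (lastVec i e) 0 := by
      funext p
      rcases lt_trichotomy ((p : Fin n) : ℕ) l with hp | hp | hp
      · rw [monVec_apply_lt _ _ hp, monVec_apply_lt _ _ (by omega : (p:ℕ) < i)]
      · rw [monVec_apply_eq _ _ hp, monVec_apply_lt _ _ (by omega : (p:ℕ) < i), hp]
      · rw [monVec_apply_gt _ _ hp]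
        rcases lt_trichotomy ((p : Fin n) : ℕ) i with hq | hq | hq
        · rw [monVec_apply_lt _ _ hq]
          unfold lastVec
          rw [if_neg (by omega)]
        · rw [monVec_apply_eq _ _ hq]
        · rw [monVec_apply_gt _ _ hq]
    rw [heq] at hmem
    exact hnm hmem
  · have hval : lastVec i e l = 0 := by unfold lastVec; rw [if_neg hl1]
    rw [hval] at hmem
    refine hnm (mem_of_ptwise_le hIdeal hmem fun x => ?_)
    rcases lt_trichotomy ((x : Fin n) : ℕ) l with hp | hp | hp
    · rw [monVec_apply_lt _ _ hp]
      have : lastVec i e (x : ℕ) = 0 := by unfold lastVec; rw [if_neg (by omega)]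
      rw [this]
      exact Nat.zero_le _
    · rw [monVec_apply_eq _ _ hp]
      exact Nat.zero_le _
    · rw [monVec_apply_gt _ _ hp]
      exact Nat.zero_le _

lemma cond_one' (hArt : IsArtinianMonomialSet S) (hIdeal : IsMonomialIdeal S)
    (hSS : IsStronglyStable S)
    (C1 : ∀ i, 2 ≤ i → i ≤ n - 1 →
      ∀ α ∈ JSet S i, fF S i (lastVec i (asum i α + 1)) + 1 ≤ fF S i α)
    {i : ℕ} (hi : 1 ≤ i) (hin : i < n) {α : ℕ → ℕ} (hα : α ∈ JSet S i) :
    fF S i (lastVec i (asum i α + 1)) + 1 ≤ fF S i α := by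
  rcases Nat.lt_or_ge i 2 with h2 | h2
  · have hi1 : i = 1 := by omega
    subst hi1
    set s := fF S 1 α with hs
    have hspos : 0 < s := fF_pos_of_J hArt hIdeal (le_refl 1) hin hα
    have hm : monVec n 1 α s ∈ S := fF_spec hArt hin α
    set q : Fin n := ⟨0, by omega⟩ with hqd
    set p : Fin n := ⟨1, by omega⟩ with hpd
    have hql : (q : ℕ) = 0 := rfl
    have hpl : (p : ℕ) = 1 := rfl
    have hqlt : q < p := by rw [Fin.lt_def, hql, hpl]; omega
    have hppos : 0 < monVec n 1 α s p := by
      rw [monVec_apply_eq α s (by rw [hpl] : (p : ℕ) = 1)]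
      omega
    have hasum : asum 1 α = α 0 := by simp [asum]
    have hres : monVec n 1 (lastVec 1 (asum 1 α + 1)) (s-1) ∈ S := by
      refine move_mem hSS hm hqlt hppos fun x => ?_
      by_cases hxq : x = q
      · rw [if_pos hxq, hxq, monVec_apply_lt _ _ (by rw [hql]; omega),
          monVec_apply_lt α s (by rw [hql]; omega), hql, hasum]
        simp [lastVec]
      · rw [if_neg hxq]
        by_cases hxp : x = p
        · rw [if_pos hxp, hxp, monVec_apply_eq _ _ (by rw [hpl] : ((p : Fin n) : ℕ) = 1),
            monVec_apply_eq α s (by rw [hpl] : ((p : Fin n) : ℕ) = 1)]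
        · rw [if_neg hxp]
          have hv0 : (x : ℕ) ≠ 0 := fun h => hxq (Fin.ext (h.trans hql.symm))
          have hv1 : (x : ℕ) ≠ 1 := fun h => hxp (Fin.ext (h.trans hpl.symm))
          have hgt : 1 < (x : ℕ) := by omega
          rw [monVec_apply_gt _ _ hgt, monVec_apply_gt α s hgt]
    have := fF_le hres
    omega
  · exact C1 i h2 (by omega) α hα

lemma cond_two' (hArt : IsArtinianMonomialSet S) (hIdeal : IsMonomialIdeal S)
    (hSS : IsStronglyStable S)
    (C2 : ∀ i, 3 ≤ i → i ≤ n - 1 → ∀ α ∈ JSet S i, ∀ β ∈ JSet S i,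
      asum i α = asum i β → RevLexLT' α β → fF S i β ≤ fF S i α)
    {i : ℕ} (hi : 2 ≤ i) (hin : i < n) {α β : ℕ → ℕ}
    (hα : α ∈ JSet S i) (hβ : β ∈ JSet S i)
    (hab : asum i α = asum i β) (hlt : RevLexLT' α β) : fF S i β ≤ fF S i α := by
  rcases Nat.lt_or_ge i 3 with h3 | h3
  · have hi2 : i = 2 := by omega
    subst hi2
    obtain ⟨j, hj1, hj2⟩ := hlt
    have hj2' : j < 2 := by
      by_contra h
      push_neg at h
      have := hα.1 j h
      omega
    have hsa : asum 2 α = α 0 + α 1 := by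
      simp [asum, Finset.sum_range_succ]
    have hsb : asum 2 β = β 0 + β 1 := by
      simp [asum, Finset.sum_range_succ]
    have hjone : j = 1 := by
      rcases Nat.lt_or_ge j 1 with h | h
      · exfalso
        have hj0 : j = 0 := by omega
        subst hj0
        have := hj2 1 (by omega)
        omega
      · omega
    subst hjone
    set s := fF S 2 α with hs
    have hm : monVec n 2 α s ∈ S := fF_spec hArt hin α
    set k := α 1 - β 1 with hk
    have hres := shift01 hSS hin k α s hm (by omega)
    have heq : monVec n 2
        (fun l => if l = 0 then α 0 + k else if l = 1 then α 1 - k else α l) s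
        = monVec n 2 β s := by
      refine monVec_congr (fun l hl => ?_) s
      interval_cases l
      · rw [if_pos rfl]
        omega
      · rw [if_neg (by omega : ¬(1 = 0)), if_pos rfl]
        omega
    rw [heq] at hres
    exact fF_le hres
  · exact C2 i h3 (by omega) α hα β hβ hab hlt

lemma arl_of_conds (hn : 3 ≤ n) (hIdeal : IsMonomialIdeal S)
    (hArt : IsArtinianMonomialSet S) (hSS : IsStronglyStable S)
    (C1 : ∀ i, 2 ≤ i → i ≤ n - 1 →
      ∀ α ∈ JSet S i, fF S i (lastVec i (asum i α + 1)) + 1 ≤ fF S i α)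
    (C2 : ∀ i, 3 ≤ i → i ≤ n - 1 → ∀ α ∈ JSet S i, ∀ β ∈ JSet S i,
      asum i α = asum i β → RevLexLT' α β → fF S i β ≤ fF S i α) :
    AlmostRevLex S := by
  intro M N hMG hdeg hlt
  by_contra hM
  obtain ⟨j, hj1, hj2⟩ := hlt
  have hN : N ∈ S := hMG.1
  have hNj : 0 < N j := by omega
  have hTne : (Finset.univ.filter (fun p : Fin n => 0 < N p)).Nonempty :=
    ⟨j, Finset.mem_filter.2 ⟨Finset.mem_univ _, hNj⟩⟩
  set I : Fin n := (Finset.univ.filter (fun p : Fin n => 0 < N p)).max' hTne with hI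
  have hjI : j ≤ I := Finset.le_max' _ j (Finset.mem_filter.2 ⟨Finset.mem_univ _, hNj⟩)
  have htpos : 0 < N I := by
    have := Finset.max'_mem _ hTne
    rw [← hI] at this
    exact (Finset.mem_filter.1 this).2
  have habove : ∀ p : Fin n, I < p → N p = 0 := by
    intro p hp
    by_contra hne
    have hmem : p ∈ Finset.univ.filter (fun p : Fin n => 0 < N p) := by
      simp [Nat.pos_of_ne_zero hne]
    exact absurd (Finset.le_max' _ _ hmem) (not_le_of_gt hp)
  set iv := (I : ℕ) with hiv
  have hivn : iv < n := I.isLt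
  set t := N I with ht
  have hNeq : N = monVec n iv (truncF N iv) t := by
    funext p
    rcases lt_trichotomy ((p : Fin n) : ℕ) iv with hp | hp | hp
    · rw [monVec_apply_lt _ t hp, truncF_lt hp p.isLt]
    · rw [monVec_apply_eq _ t hp]
      rw [show p = I from Fin.ext (by omega)]
    · rw [monVec_apply_gt _ t hp]
      exact habove p (by rw [Fin.lt_def]; omega)
  have hN'nm : (fun x => if x = I then N x - 1 else N x) ∉ S := by
    intro hmem
    have heqq := hMG.2 _ hmem (fun x => by
      show (if x = I then N x - 1 else N x) ≤ N x
      split <;> omega)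
    have h3 : N I - 1 = N I := by
      have h4 := congrFun heqq I
      simpa using h4
    omega
  have htrunc : truncF (fun x => if x = I then N x - 1 else N x) iv = truncF N iv := by
    funext l
    by_cases hl : l < iv
    · have hln : l < n := by omega
      rw [truncF_lt hl hln, truncF_lt hl hln]
      show (if (⟨l, hln⟩ : Fin n) = I then N ⟨l, hln⟩ - 1 else N ⟨l, hln⟩) = N ⟨l, hln⟩
      rw [if_neg (fun h => by
        have h5 : l = (I : ℕ) := congrArg Fin.val h
        omega)]
    · rw [truncF_ge (by omega), truncF_ge (by omega)]
  have hαJ : truncF N iv ∈ JSet S iv :=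
    htrunc ▸ trunc_J_of_notMem hArt hIdeal hN'nm (le_of_lt hivn)
  have hfFα : fF S iv (truncF N iv) = t := by
    have hup : fF S iv (truncF N iv) ≤ t := fF_le (by rw [← hNeq]; exact hN)
    have hlow := lt_fF_of_notMem hArt hIdeal hN'nm I
    rw [fF_lift_trunc (i := iv) I (by omega), htrunc] at hlow
    rw [if_pos rfl] at hlow
    rw [← hiv] at hlow
    omega
  rcases Nat.eq_zero_or_pos iv with hiv0 | hiv1
  · -- iv = 0 : degree contradiction
    have hj0 : j = I := Fin.ext (by omega)
    have hdegN : mdeg N = N I := by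
      unfold mdeg
      refine Finset.sum_eq_single_of_mem I (Finset.mem_univ _) fun p _ hp => ?_
      refine habove p ?_
      rw [Fin.lt_def]
      have : (p : ℕ) ≠ iv := fun h => hp (Fin.ext (by omega))
      omega
    have hdegM : mdeg M = M I := by
      unfold mdeg
      refine Finset.sum_eq_single_of_mem I (Finset.mem_univ _) fun p _ hp => ?_
      have hIp : I < p := by
        rw [Fin.lt_def]
        have : (p : ℕ) ≠ iv := fun h => hp (Fin.ext (by omega))
        omega
      rw [← hj2 p (lt_of_le_of_lt hjI hIp)]
      exact habove p hIp
    rw [hdegM, hdegN] at hdeg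
    rw [hj0] at hj1
    omega
  · have hγJ : truncF M iv ∈ JSet S iv := trunc_J_of_notMem hArt hIdeal hM (le_of_lt hivn)
    have hMIfF : M I < fF S iv (truncF M iv) := by
      have := lt_fF_of_notMem hArt hIdeal hM I
      rw [fF_lift_trunc (i := iv) I (by omega)] at this
      exact this
    rcases eq_or_lt_of_le hjI with hcase | hcase
    · -- j = I
      have hMzero : ∀ p : Fin n, I < p → M p = 0 := fun p hp => by
        rw [← hj2 p (by rw [hcase]; exact hp)]
        exact habove p hp
      have hMeq : M = monVec n iv (truncF M iv) (M I) := by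
        funext p
        rcases lt_trichotomy ((p : Fin n) : ℕ) iv with hp | hp | hp
        · rw [monVec_apply_lt _ _ hp, truncF_lt hp p.isLt]
        · rw [monVec_apply_eq _ _ hp]
          rw [show p = I from Fin.ext (by omega)]
        · rw [monVec_apply_gt _ _ hp]
          exact hMzero p (by rw [Fin.lt_def]; omega)
      have hMIt : M I < t := by
        rw [hcase] at hj1
        omega
      have hdM : mdeg M = asum iv (truncF M iv) + M I := by
        conv_lhs => rw [hMeq]
        rw [mdeg_monVec hivn]
      have hdN : mdeg N = asum iv (truncF N iv) + t := by
        conv_lhs => rw [hNeq]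
        rw [mdeg_monVec hivn]
      have hd'a : asum iv (truncF N iv) + 1 ≤ asum iv (truncF M iv) := by omega
      have hLd' : monVec n iv (lastVec iv (asum iv (truncF M iv))) 0 ∉ S := by
        intro hmem
        refine J_notMem (by omega) hiv1 hγJ ?_
        exact spread hIdeal hSS hiv1 hivn _ (truncF M iv) rfl (fun l hl => hγJ.1 l hl) hmem
      have hLe : ∀ e, e ≤ asum iv (truncF M iv) → monVec n iv (lastVec iv e) 0 ∉ S := by
        intro e he hmem
        refine hLd' (mem_of_ptwise_le hIdeal hmem fun x => ?_)
        rcases lt_trichotomy ((x : Fin n) : ℕ) iv with hp | hp | hp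
        · rw [monVec_apply_lt _ _ hp, monVec_apply_lt _ _ hp]
          unfold lastVec
          split <;> omega
        · rw [monVec_apply_eq _ _ hp, monVec_apply_eq _ _ hp]
        · rw [monVec_apply_gt _ _ hp, monVec_apply_gt _ _ hp]
      have hLJ : ∀ e, e ≤ asum iv (truncF M iv) → lastVec iv e ∈ JSet S iv := fun e he =>
        lastVec_J hArt hIdeal hiv1 hivn (hLe e he)
      have hchain : ∀ e, asum iv (truncF N iv) + 1 ≤ e → e ≤ asum iv (truncF M iv) →
          fF S iv (lastVec iv e) + (e - asum iv (truncF N iv)) ≤ t := by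
        intro e
        induction e with
        | zero => intro h1 _; omega
        | succ e IHe =>
          intro h1 h2
          rcases Nat.lt_or_ge e (asum iv (truncF N iv) + 1) with hc | hc
          · have hea : e = asum iv (truncF N iv) := by omega
            have hbase := cond_one' hArt hIdeal hSS C1 hiv1 hivn hαJ
            rw [hea]
            omega
          · have hIH := IHe (by omega) (by omega)
            have hJe := hLJ e (by omega)
            have hstep := cond_one' hArt hIdeal hSS C1 hiv1 hivn hJe
            rw [asum_lastVec hiv1] at hstep
            omega
      have hlast := hchain (asum iv (truncF M iv)) hd'a (le_refl _)
      have hγlast : fF S iv (truncF M iv) ≤ fF S iv (lastVec iv (asum iv (truncF M iv))) := by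
        refine fF_le (spread hIdeal hSS hiv1 hivn _ (truncF M iv) rfl
          (fun l hl => hγJ.1 l hl) ?_)
        exact fF_spec hArt hivn _
      omega
    · -- j < I
      have hMeq : M = monVec n iv (truncF M iv) t := by
        funext p
        rcases lt_trichotomy ((p : Fin n) : ℕ) iv with hp | hp | hp
        · rw [monVec_apply_lt _ _ hp, truncF_lt hp p.isLt]
        · rw [monVec_apply_eq _ _ hp]
          rw [show p = I from Fin.ext (by omega), ht]
          exact (hj2 I hcase).symm
        · rw [monVec_apply_gt _ _ hp]
          have hIp : I < p := by rw [Fin.lt_def]; omega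
          rw [← hj2 p (lt_of_le_of_lt hjI hIp)]
          exact habove p hIp
      have hMIt : M I = t := by
        rw [ht]
        exact (hj2 I hcase).symm
      have hdM : mdeg M = asum iv (truncF M iv) + t := by
        conv_lhs => rw [hMeq]
        rw [mdeg_monVec hivn]
      have hdN : mdeg N = asum iv (truncF N iv) + t := by
        conv_lhs => rw [hNeq]
        rw [mdeg_monVec hivn]
      have hasum : asum iv (truncF N iv) = asum iv (truncF M iv) := by omega
      have hjiv : (j : ℕ) < iv := by rw [Fin.lt_def] at hcase; omega
      have hrevlex : RevLexLT' (truncF N iv) (truncF M iv) := by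
        refine ⟨(j : ℕ), ?_, ?_⟩
        · rw [truncF_lt hjiv j.isLt, truncF_lt hjiv j.isLt]
          simpa using hj1
        · intro l hl
          by_cases hli : l < iv
          · have hln : l < n := by omega
            rw [truncF_lt hli hln, truncF_lt hli hln]
            exact hj2 ⟨l, hln⟩ (by rw [Fin.lt_def]; exact hl)
          · rw [truncF_ge (by omega), truncF_ge (by omega)]
      rcases Nat.lt_or_ge iv 2 with hiv2 | hiv2
      · -- iv = 1 : impossible
        have hiv1' : iv = 1 := by omega
        have hj0 : (j : ℕ) = 0 := by omega
        have e1 : asum iv (truncF M iv) = truncF M iv 0 := by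
          rw [hiv1']
          simp [asum]
        have e2 : asum iv (truncF N iv) = truncF N iv 0 := by
          rw [hiv1']
          simp [asum]
        have e3 : truncF M iv 0 = M j := by
          rw [truncF_lt (by omega) (by omega)]
          exact congrArg M (Fin.ext (show (0:ℕ) = (j:ℕ) by omega))
        have e4 : truncF N iv 0 = N j := by
          rw [truncF_lt (by omega) (by omega)]
          exact congrArg N (Fin.ext (show (0:ℕ) = (j:ℕ) by omega))
        omega
      · have hf := cond_two' hArt hIdeal hSS C2 hiv2 hivn hαJ hγJ hasum hrevlex
        omega

end ARL

/-- Main Theorem, monomial-ideal content.  Let `n ≥ 3` and let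
`J` be a strongly stable Artinian monomial ideal in `k[x_1,…,x_n]`.  Then `J`
is almost reverse lexicographic iff:
(1) for each `2 ≤ i ≤ n-1` and every `α ∈ J_i`,
    `f_{i+1}(0,…,0,|α|+1) + 1 ≤ f_{i+1}(α)`; and
(2) for each `3 ≤ i ≤ n-1` and all `α, β ∈ J_i` with `|α| = |β|` and `α < β`
    in reverse lexicographic order, `f_{i+1}(β) ≤ f_{i+1}(α)`. -/
theorem almostRevLex_iff_reduced_conditions
    {n : ℕ} (hn : 3 ≤ n) (S : Set (Fin n → ℕ))
    (hIdeal : IsMonomialIdeal S) (hArt : IsArtinianMonomialSet S)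
    (hSS : IsStronglyStable S) :
    AlmostRevLex S ↔
      ((∀ i, 2 ≤ i → i ≤ n - 1 →
          ∀ α ∈ JSet S i, fF S i (lastVec i (asum i α + 1)) + 1 ≤ fF S i α) ∧
       (∀ i, 3 ≤ i → i ≤ n - 1 →
          ∀ α ∈ JSet S i, ∀ β ∈ JSet S i,
            asum i α = asum i β → RevLexLT' α β → fF S i β ≤ fF S i α)) := by
  
  constructor
  · intro hARL
    constructor
    · intro i h2 hle α hα
      exact ARL.cond_one hArt hIdeal hARL (by omega) (by omega) (asum i α) α hα rfl
    · intro i h3 hle α hα β hβ hab hlt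
      exact ARL.cond_two hArt hIdeal hSS hARL (by omega) (by omega) hα hβ hab hlt
  · rintro ⟨C1, C2⟩
    exact ARL.arl_of_conds hn hIdeal hArt hSS C1 C2
end

section
/- Let S = k[x,y,z,w] with the reverse lexicographic order given by x > y > z > w, and let I be the monomial ideal generated by x^2, xy^2, y^4, y^3z, xyz^2, y^2z^2, xz^3, yz^3, z^4, y^3w, xyzw, xz^2w^2, y^2zw^3, yz^2w^3, z^3w^3, xyw^4, y^2w^4, xzw^4, yzw^4, z^2w^4, xw^5, yw^5, zw^5, w^6. Then: (a) I is a strongly stable Artinian monomial ideal; (b) I satisfies f_4(0,0,|α|+1) + 1 ≤ f_4(α) for all α ∈ J_3 and f_3(0,|α|+1) + 1 ≤ f_3(α) for all α ∈ J_2; but (c) xz^2w^2 is a minimal generator of I, the monomial y^2zw^2 is greater than xz^2w^2 in the reverse lexicographic order and has the same degree, and y^2zw^2 ∉ I, so I is not almost reverse lexicographic. -/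
/-- The generators of the example ideal
`I = (x², xy², y⁴, y³z, xyz², y²z², xz³, yz³, z⁴, y³w, xyzw, xz²w², y²zw³,
yz²w³, z³w³, xyw⁴, y²w⁴, xzw⁴, yzw⁴, z²w⁴, xw⁵, yw⁵, zw⁵, w⁶) ⊆ k[x,y,z,w]`,
as exponent vectors `(x,y,z,w) = (x_1,x_2,x_3,x_4)`. -/
def exGens : Set (Fin 4 → ℕ) :=
  {![2,0,0,0], ![1,2,0,0], ![0,4,0,0], ![0,3,1,0], ![1,1,2,0], ![0,2,2,0],
   ![1,0,3,0], ![0,1,3,0], ![0,0,4,0], ![0,3,0,1], ![1,1,1,1], ![1,0,2,2],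
   ![0,2,1,3], ![0,1,2,3], ![0,0,3,3], ![1,1,0,4], ![0,2,0,4], ![1,0,1,4],
   ![0,1,1,4], ![0,0,2,4], ![1,0,0,5], ![0,1,0,5], ![0,0,1,5], ![0,0,0,6]}

/-- The monomial ideal generated by `exGens`: all monomials divisible by one of
the generators. -/
def exIdeal : Set (Fin 4 → ℕ) := {m | ∃ g ∈ exGens, ∀ l, g l ≤ m l}

abbrev gensList : List (Fin 4 → ℕ) :=
  [![2,0,0,0], ![1,2,0,0], ![0,4,0,0], ![0,3,1,0], ![1,1,2,0], ![0,2,2,0],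
   ![1,0,3,0], ![0,1,3,0], ![0,0,4,0], ![0,3,0,1], ![1,1,1,1], ![1,0,2,2],
   ![0,2,1,3], ![0,1,2,3], ![0,0,3,3], ![1,1,0,4], ![0,2,0,4], ![1,0,1,4],
   ![0,1,1,4], ![0,0,2,4], ![1,0,0,5], ![0,1,0,5], ![0,0,1,5], ![0,0,0,6]]

abbrev D (m : Fin 4 → ℕ) : Prop := ∃ g ∈ gensList, ∀ l, g l ≤ m l

lemma memI (m : Fin 4 → ℕ) : m ∈ exIdeal ↔ D m := by
  have h : ∀ g : Fin 4 → ℕ, g ∈ exGens ↔ g ∈ gensList := by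
    intro g; simp [exGens, gensList]
  constructor
  · rintro ⟨g, hg, hle⟩; exact ⟨g, (h g).mp hg, hle⟩
  · rintro ⟨g, hg, hle⟩; exact ⟨g, (h g).mpr hg, hle⟩

lemma fFc {i v : ℕ} (β : ℕ → ℕ) (h1 : D (monVec 4 i β v))
    (h2 : ∀ k, k < v → ¬ D (monVec 4 i β k)) : fF exIdeal i β = v := by
  have hv : v ∈ {t | monVec 4 i β t ∈ exIdeal} := (memI _).mpr h1
  refine le_antisymm (Nat.sInf_le hv) ?_
  by_contra h
  push_neg at h
  have hm := Nat.sInf_mem (⟨v, hv⟩ : {t | monVec 4 i β t ∈ exIdeal}.Nonempty)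
  exact h2 _ h ((memI _).mp hm)

def cvec (a b c : ℕ) : ℕ → ℕ :=
  fun l => if l = 0 then a else if l = 1 then b else if l = 2 then c else 0

lemma fF_congr {i : ℕ} {α β : ℕ → ℕ} (h : ∀ l, l < i → α l = β l) :
    fF exIdeal i α = fF exIdeal i β := by
  have : ∀ t, monVec 4 i α t = monVec 4 i β t := by
    intro t; funext l
    by_cases hl : (l : ℕ) < i <;> simp [monVec, hl, h]
  unfold fF
  congr 1
  ext t
  simp only [Set.mem_setOf_eq, this t]

example : fF exIdeal 2 (cvec 0 0 0) = 4 := fFc _ (by decide) (by decide)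
example : fF exIdeal 3 (cvec 0 0 0) = 6 := fFc _ (by decide) (by decide)
example : fF exIdeal 0 (cvec 0 0 0) = 2 := fFc _ (by decide) (by decide)
lemma stableGens : ∀ g ∈ gensList, ∀ i j : Fin 4, i < j → 0 < g j →
    D (fun l => if l = i then g i + 1 else if l = j then g j - 1 else g l) := by decide

lemma uniqGen : ∀ g ∈ gensList, (∀ l, g l ≤ (![1,0,2,2] : Fin 4 → ℕ) l) →
    g = ![1,0,2,2] := by decide

lemma partA : IsMonomialIdeal exIdeal ∧ IsArtinianMonomialSet exIdeal ∧
    IsStronglyStable exIdeal := by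
  refine ⟨?_, ?_, ?_⟩
  · rintro m ⟨g, hg, hle⟩ m'
    exact ⟨g, hg, fun l => le_trans (hle l) (Nat.le_add_right _ _)⟩
  · apply Set.Finite.subset (Set.Finite.pi (fun l : Fin 4 => Set.finite_Iio 6))
    intro m hm
    simp only [Set.mem_pi, Set.mem_univ, Set.mem_Iio, forall_true_left]
    intro l
    by_contra hc
    push_neg at hc
    apply hm
    rw [memI]
    fin_cases l
    · exact ⟨![2,0,0,0], by decide, by intro l'; fin_cases l' <;> simp_all <;> omega⟩
    · exact ⟨![0,4,0,0], by decide, by intro l'; fin_cases l' <;> simp_all <;> omega⟩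
    · exact ⟨![0,0,4,0], by decide, by intro l'; fin_cases l' <;> simp_all <;> omega⟩
    · exact ⟨![0,0,0,6], by decide, by intro l'; fin_cases l' <;> simp_all <;> omega⟩
  · rintro m hm i j hij hpos
    obtain ⟨g, hg, hle⟩ := (memI m).mp hm
    rw [memI]
    by_cases hgj : 0 < g j
    · obtain ⟨g', hg', hle'⟩ := stableGens g hg i j hij hgj
      refine ⟨g', hg', fun l => ?_⟩
      show g' l ≤ if l = i then m i + 1 else if l = j then m j - 1 else m l
      have h0 : g' l ≤ if l = i then g i + 1 else if l = j then g j - 1 else g l := hle' l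
      have key : (if l = i then g i + 1 else if l = j then g j - 1 else g l)
          ≤ if l = i then m i + 1 else if l = j then m j - 1 else m l := by
        split_ifs with h1 h2
        · have := hle i; omega
        · have := hle j; omega
        · exact hle l
      exact le_trans h0 key
    · push_neg at hgj
      refine ⟨g, hg, fun l => ?_⟩
      show g l ≤ if l = i then m i + 1 else if l = j then m j - 1 else m l
      split_ifs with h1 h2
      · rw [h1]; have := hle i; omega
      · rw [h2]; omega
      · exact hle l

lemma partC : IsMinGen exIdeal ![1,0,2,2] ∧
      mdeg (![0,2,1,2] : Fin 4 → ℕ) = mdeg (![1,0,2,2] : Fin 4 → ℕ) ∧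
      RevLexLT ![1,0,2,2] ![0,2,1,2] ∧
      ![0,2,1,2] ∉ exIdeal ∧
      ¬ AlmostRevLex exIdeal := by
  have hmin : IsMinGen exIdeal ![1,0,2,2] := by
    constructor
    · rw [memI]; decide
    · intro m' hm' hle
      obtain ⟨g, hg, hle'⟩ := (memI m').mp hm'
      have hgeq : g = ![1,0,2,2] :=
        uniqGen g hg (fun l => le_trans (hle' l) (hle l))
      funext l
      exact le_antisymm (hle l) (hgeq ▸ hle' l)
  have hnot : ![0,2,1,2] ∉ exIdeal := fun h => by
    have := (memI _).mp h; revert this; decide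
  have hdeg : mdeg (![0,2,1,2] : Fin 4 → ℕ) = mdeg (![1,0,2,2] : Fin 4 → ℕ) := by decide
  have hrl : RevLexLT ![1,0,2,2] ![0,2,1,2] := ⟨2, by decide, by decide⟩
  exact ⟨hmin, hdeg, hrl, hnot, fun h => hnot (h _ _ hmin hdeg hrl)⟩
lemma case2 (α : ℕ → ℕ) (a b v1 v2 : ℕ) (ha : α 0 = a) (hb : α 1 = b)
    (h1 : fF exIdeal 2 (cvec 0 (a + b + 1) 0) = v1)
    (h2 : fF exIdeal 2 (cvec a b 0) = v2) (hv : v1 + 1 ≤ v2) :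
    fF exIdeal 2 (lastVec 2 (asum 2 α + 1)) + 1 ≤ fF exIdeal 2 α := by
  have hs : asum 2 α = a + b := by simp [asum, Finset.sum_range_succ, ha, hb]
  rw [hs, fF_congr (i := 2) (α := lastVec 2 (a + b + 1)) (β := cvec 0 (a + b + 1) 0)
      (by intro l hl; interval_cases l <;> simp [lastVec, cvec]),
    fF_congr (i := 2) (α := α) (β := cvec a b 0)
      (by intro l hl; interval_cases l <;> simp [cvec, ha, hb]), h1, h2]
  exact hv

lemma case3 (α : ℕ → ℕ) (a b c v1 v2 : ℕ) (ha : α 0 = a) (hb : α 1 = b) (hc : α 2 = c)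
    (h1 : fF exIdeal 3 (cvec 0 0 (a + b + c + 1)) = v1)
    (h2 : fF exIdeal 3 (cvec a b c) = v2) (hv : v1 + 1 ≤ v2) :
    fF exIdeal 3 (lastVec 3 (asum 3 α + 1)) + 1 ≤ fF exIdeal 3 α := by
  have hs : asum 3 α = a + b + c := by simp [asum, Finset.sum_range_succ, ha, hb, hc]
  rw [hs, fF_congr (i := 3) (α := lastVec 3 (a + b + c + 1)) (β := cvec 0 0 (a + b + c + 1))
      (by intro l hl; interval_cases l <;> simp [lastVec, cvec]),
    fF_congr (i := 3) (α := α) (β := cvec a b c)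
      (by intro l hl; interval_cases l <;> simp [cvec, ha, hb, hc]), h1, h2]
  exact hv

lemma partB3 : ∀ α ∈ JSet exIdeal 3,
    fF exIdeal 3 (lastVec 3 (asum 3 α + 1)) + 1 ≤ fF exIdeal 3 α := by
  rintro α ⟨hz, hlt⟩
  have f0 : fF exIdeal 0 α = 2 := by
    rw [fF_congr (i := 0) (β := cvec 0 0 0) (fun l hl => absurd hl (by omega))]
    exact fFc _ (by decide) (by decide)
  have h0' : α 0 = 0 ∨ α 0 = 1 := by have := hlt 0 (by omega); rw [f0] at this; omega
  rcases h0' with ha | ha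
  · have f1 : fF exIdeal 1 α = 4 := by
      rw [fF_congr (i := 1) (β := cvec 0 0 0) (by intro l hl; interval_cases l <;> simp [cvec, ha])]
      exact fFc _ (by decide) (by decide)
    have h1' : α 1 = 0 ∨ α 1 = 1 ∨ α 1 = 2 ∨ α 1 = 3 := by have := hlt 1 (by omega); rw [f1] at this; omega
    rcases h1' with hb | hb | hb | hb
    · have f2 : fF exIdeal 2 α = 4 := by
        rw [fF_congr (i := 2) (β := cvec 0 0 0) (by intro l hl; interval_cases l <;> simp [cvec, ha, hb])]
        exact fFc _ (by decide) (by decide)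
      have h2' : α 2 = 0 ∨ α 2 = 1 ∨ α 2 = 2 ∨ α 2 = 3 := by have := hlt 2 (by omega); rw [f2] at this; omega
      rcases h2' with hc | hc | hc | hc
      · exact case3 α 0 0 0 5 6 ha hb hc (fFc _ (by decide) (by decide)) (fFc _ (by decide) (by decide)) (by omega)
      · exact case3 α 0 0 1 4 5 ha hb hc (fFc _ (by decide) (by decide)) (fFc _ (by decide) (by decide)) (by omega)
      · exact case3 α 0 0 2 3 4 ha hb hc (fFc _ (by decide) (by decide)) (fFc _ (by decide) (by decide)) (by omega)
      · exact case3 α 0 0 3 0 3 ha hb hc (fFc _ (by decide) (by decide)) (fFc _ (by decide) (by decide)) (by omega)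
    · have f2 : fF exIdeal 2 α = 3 := by
        rw [fF_congr (i := 2) (β := cvec 0 1 0) (by intro l hl; interval_cases l <;> simp [cvec, ha, hb])]
        exact fFc _ (by decide) (by decide)
      have h2' : α 2 = 0 ∨ α 2 = 1 ∨ α 2 = 2 := by have := hlt 2 (by omega); rw [f2] at this; omega
      rcases h2' with hc | hc | hc
      · exact case3 α 0 1 0 4 5 ha hb hc (fFc _ (by decide) (by decide)) (fFc _ (by decide) (by decide)) (by omega)
      · exact case3 α 0 1 1 3 4 ha hb hc (fFc _ (by decide) (by decide)) (fFc _ (by decide) (by decide)) (by omega)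
      · exact case3 α 0 1 2 0 3 ha hb hc (fFc _ (by decide) (by decide)) (fFc _ (by decide) (by decide)) (by omega)
    · have f2 : fF exIdeal 2 α = 2 := by
        rw [fF_congr (i := 2) (β := cvec 0 2 0) (by intro l hl; interval_cases l <;> simp [cvec, ha, hb])]
        exact fFc _ (by decide) (by decide)
      have h2' : α 2 = 0 ∨ α 2 = 1 := by have := hlt 2 (by omega); rw [f2] at this; omega
      rcases h2' with hc | hc
      · exact case3 α 0 2 0 3 4 ha hb hc (fFc _ (by decide) (by decide)) (fFc _ (by decide) (by decide)) (by omega)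
      · exact case3 α 0 2 1 0 3 ha hb hc (fFc _ (by decide) (by decide)) (fFc _ (by decide) (by decide)) (by omega)
    · have f2 : fF exIdeal 2 α = 1 := by
        rw [fF_congr (i := 2) (β := cvec 0 3 0) (by intro l hl; interval_cases l <;> simp [cvec, ha, hb])]
        exact fFc _ (by decide) (by decide)
      have hc : α 2 = 0 := by have := hlt 2 (by omega); rw [f2] at this; omega
      exact case3 α 0 3 0 0 1 ha hb hc (fFc _ (by decide) (by decide)) (fFc _ (by decide) (by decide)) (by omega)
  · have f1 : fF exIdeal 1 α = 2 := by
      rw [fF_congr (i := 1) (β := cvec 1 0 0) (by intro l hl; interval_cases l <;> simp [cvec, ha])]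
      exact fFc _ (by decide) (by decide)
    have h1' : α 1 = 0 ∨ α 1 = 1 := by have := hlt 1 (by omega); rw [f1] at this; omega
    rcases h1' with hb | hb
    · have f2 : fF exIdeal 2 α = 3 := by
        rw [fF_congr (i := 2) (β := cvec 1 0 0) (by intro l hl; interval_cases l <;> simp [cvec, ha, hb])]
        exact fFc _ (by decide) (by decide)
      have h2' : α 2 = 0 ∨ α 2 = 1 ∨ α 2 = 2 := by have := hlt 2 (by omega); rw [f2] at this; omega
      rcases h2' with hc | hc | hc
      · exact case3 α 1 0 0 4 5 ha hb hc (fFc _ (by decide) (by decide)) (fFc _ (by decide) (by decide)) (by omega)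
      · exact case3 α 1 0 1 3 4 ha hb hc (fFc _ (by decide) (by decide)) (fFc _ (by decide) (by decide)) (by omega)
      · exact case3 α 1 0 2 0 2 ha hb hc (fFc _ (by decide) (by decide)) (fFc _ (by decide) (by decide)) (by omega)
    · have f2 : fF exIdeal 2 α = 2 := by
        rw [fF_congr (i := 2) (β := cvec 1 1 0) (by intro l hl; interval_cases l <;> simp [cvec, ha, hb])]
        exact fFc _ (by decide) (by decide)
      have h2' : α 2 = 0 ∨ α 2 = 1 := by have := hlt 2 (by omega); rw [f2] at this; omega
      rcases h2' with hc | hc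
      · exact case3 α 1 1 0 3 4 ha hb hc (fFc _ (by decide) (by decide)) (fFc _ (by decide) (by decide)) (by omega)
      · exact case3 α 1 1 1 0 1 ha hb hc (fFc _ (by decide) (by decide)) (fFc _ (by decide) (by decide)) (by omega)

lemma partB2 : ∀ α ∈ JSet exIdeal 2,
    fF exIdeal 2 (lastVec 2 (asum 2 α + 1)) + 1 ≤ fF exIdeal 2 α := by
  rintro α ⟨hz, hlt⟩
  have f0 : fF exIdeal 0 α = 2 := by
    rw [fF_congr (i := 0) (β := cvec 0 0 0) (fun l hl => absurd hl (by omega))]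
    exact fFc _ (by decide) (by decide)
  have h0' : α 0 = 0 ∨ α 0 = 1 := by have := hlt 0 (by omega); rw [f0] at this; omega
  rcases h0' with ha | ha
  · have f1 : fF exIdeal 1 α = 4 := by
      rw [fF_congr (i := 1) (β := cvec 0 0 0) (by intro l hl; interval_cases l <;> simp [cvec, ha])]
      exact fFc _ (by decide) (by decide)
    have h1' : α 1 = 0 ∨ α 1 = 1 ∨ α 1 = 2 ∨ α 1 = 3 := by have := hlt 1 (by omega); rw [f1] at this; omega
    rcases h1' with hb | hb | hb | hb
    · exact case2 α 0 0 3 4 ha hb (fFc _ (by decide) (by decide)) (fFc _ (by decide) (by decide)) (by omega)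
    · exact case2 α 0 1 2 3 ha hb (fFc _ (by decide) (by decide)) (fFc _ (by decide) (by decide)) (by omega)
    · exact case2 α 0 2 1 2 ha hb (fFc _ (by decide) (by decide)) (fFc _ (by decide) (by decide)) (by omega)
    · exact case2 α 0 3 0 1 ha hb (fFc _ (by decide) (by decide)) (fFc _ (by decide) (by decide)) (by omega)
  · have f1 : fF exIdeal 1 α = 2 := by
      rw [fF_congr (i := 1) (β := cvec 1 0 0) (by intro l hl; interval_cases l <;> simp [cvec, ha])]
      exact fFc _ (by decide) (by decide)
    have h1' : α 1 = 0 ∨ α 1 = 1 := by have := hlt 1 (by omega); rw [f1] at this; omega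
    rcases h1' with hb | hb
    · exact case2 α 1 0 2 3 ha hb (fFc _ (by decide) (by decide)) (fFc _ (by decide) (by decide)) (by omega)
    · exact case2 α 1 1 1 2 ha hb (fFc _ (by decide) (by decide)) (fFc _ (by decide) (by decide)) (by omega)
/-- Example.  In `S = k[x,y,z,w]` the displayed monomial
ideal `I` satisfies: (a) `I` is a strongly stable Artinian monomial ideal;
(b) `f_4(0,0,|α|+1) + 1 ≤ f_4(α)` for all `α ∈ J_3` and
`f_3(0,|α|+1) + 1 ≤ f_3(α)` for all `α ∈ J_2` (the strong Lefschetz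
conditions); but (c) `xz²w²` is a minimal generator of `I`, `y²zw²` has the
same degree and is greater in the reverse lexicographic order, yet
`y²zw² ∉ I`; hence `I` is not almost reverse lexicographic. -/
theorem example_SLP_conditions_but_not_almostRevLex :
    (IsMonomialIdeal exIdeal ∧ IsArtinianMonomialSet exIdeal ∧
      IsStronglyStable exIdeal) ∧
    ((∀ α ∈ JSet exIdeal 3,
        fF exIdeal 3 (lastVec 3 (asum 3 α + 1)) + 1 ≤ fF exIdeal 3 α) ∧
     (∀ α ∈ JSet exIdeal 2,
        fF exIdeal 2 (lastVec 2 (asum 2 α + 1)) + 1 ≤ fF exIdeal 2 α)) ∧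
    (IsMinGen exIdeal ![1,0,2,2] ∧
      mdeg (![0,2,1,2] : Fin 4 → ℕ) = mdeg (![1,0,2,2] : Fin 4 → ℕ) ∧
      RevLexLT ![1,0,2,2] ![0,2,1,2] ∧
      ![0,2,1,2] ∉ exIdeal ∧
      ¬ AlmostRevLex exIdeal) := by
  exact ⟨partA, ⟨partB3, partB2⟩, partC⟩
end
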